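/- Postponement: in ℓΛ∞^{4S}, if M ⤳ N and N reduces at depth 0 to L, then there exists P such that M reduces at depth 0 to P and P ⤳ L. -/

import Mathlib

namespace LLInf

/-- Node labels of preterms of the linear infinitary λ-calculus ℓΛ∞. -/
inductive Shape where
  | var (x : ℕ)
  | app
  | labs (x : ℕ)
  | iabs (x : ℕ)
  | cabs (x : ℕ)
  | ibox
  | cbox
deriving DecidableEq

/-- Preterms: possibly infinite trees, encoded by their (partial) position function. -/
def T : Type := List ℕ → Option Shape

def mk0 (s : Shape) : T := fun p => if p = [] then some s else none

def mk1 (s : Shape) (M : T) : T := fun p =>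
  match p with
  | [] => some s
  | 0 :: q => M q
  | _ => none

def mk2 (M N : T) : T := fun p =>
  match p with
  | [] => some Shape.app
  | 0 :: q => M q
  | 1 :: q => N q
  | _ => none

def child (M : T) (i : ℕ) : T := fun p => M (i :: p)

def bindsX (x : ℕ) : Option Shape → Bool
  | some (Shape.labs y) => y == x
  | some (Shape.iabs y) => y == x
  | some (Shape.cabs y) => y == x
  | _ => false

/-- Capture-avoiding (shadowing-respecting) substitution on positional preterms. -/
def substF (x : ℕ) (N : T) : T → List ℕ → Option Shape
  | M, [] => if M [] = some (Shape.var x) then N [] else M []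
  | M, i :: q =>
      if M [] = some (Shape.var x) then N (i :: q)
      else if bindsX x (M []) then M (i :: q)
      else substF x N (child M i) q
termination_by M p => p.length

def subst (x : ℕ) (N M : T) : T := fun p => substF x N M p

def FreeAt (x : ℕ) : T → List ℕ → Prop
  | M, [] => M [] = some (Shape.var x)
  | M, i :: q => bindsX x (M []) = false ∧ FreeAt x (child M i) q
termination_by M p => p.length

/-- `x` occurs free in `M`. -/
def Free (x : ℕ) (M : T) : Prop := ∃ p, FreeAt x M p

def arity : Shape → ℕ
  | Shape.var _ => 0
  | Shape.app => 2
  | _ => 1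

/-- The position function is a coherent (constructor-generated) tree. -/
def IsPre (M : T) : Prop :=
  (∃ s, M [] = some s) ∧
  (∀ p t, M p = some t → ∀ i, (∃ s, M (p ++ [i]) = some s) ↔ i < arity t) ∧
  (∀ p q, M p = none → M (p ++ q) = none)

/-- Basic reduction of ℓΛ∞. -/
inductive Basic : T → T → Prop
  | lin (x : ℕ) (M N : T) :
      Basic (mk2 (mk1 (Shape.labs x) M) N) (subst x N M)
  | ind (x : ℕ) (M N : T) :
      Basic (mk2 (mk1 (Shape.iabs x) M) (mk1 Shape.ibox N)) (subst x N M)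
  | coi (x : ℕ) (M N : T) :
      Basic (mk2 (mk1 (Shape.cabs x) M) (mk1 Shape.cbox N)) (subst x N M)

/-- One-step reduction, indexed by the level: the list of boxes crossed,
`false` for an inductive box, `true` for a coinductive box. -/
inductive Red : List Bool → T → T → Prop
  | base {M N} : Basic M N → Red [] M N
  | appL {s M N} (P) : Red s M N → Red s (mk2 M P) (mk2 N P)
  | appR {s M N} (P) : Red s M N → Red s (mk2 P M) (mk2 P N)
  | labs {s M N} (x) : Red s M N → Red s (mk1 (Shape.labs x) M) (mk1 (Shape.labs x) N)
  | iabs {s M N} (x) : Red s M N → Red s (mk1 (Shape.iabs x) M) (mk1 (Shape.iabs x) N)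
  | cabs {s M N} (x) : Red s M N → Red s (mk1 (Shape.cabs x) M) (mk1 (Shape.cabs x) N)
  | ibox {s M N} : Red s M N → Red (false :: s) (mk1 Shape.ibox M) (mk1 Shape.ibox N)
  | cbox {s M N} : Red s M N → Red (true :: s) (mk1 Shape.cbox M) (mk1 Shape.cbox N)

def Red' (M N : T) : Prop := ∃ s, Red s M N

/-- Reduction at depth `n`: at a level crossing exactly `n` coinductive boxes. -/
def RedAt (n : ℕ) (M N : T) : Prop := ∃ s, s.count true = n ∧ Red s M N

def Star : T → T → Prop := Relation.ReflTransGen Red'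

/-! ### Environments and well-formation for ℓΛ∞ -/

inductive Pat where
  | lin | ind | coi
deriving DecidableEq

def Env : Type := ℕ → Option Pat

def Env.upd (Γ : Env) (x : ℕ) (p : Option Pat) : Env :=
  fun y => if y = x then p else Γ y

def Env.union (Γ Δ : Env) : Env := fun y => (Γ y).orElse (fun _ => Δ y)

def NoLin (Γ : Env) : Prop := ∀ y, Γ y ≠ some Pat.lin

def OnlyLinAt (Γ : Env) (x : ℕ) : Prop :=
  Γ x = some Pat.lin ∧ ∀ y, y ≠ x → Γ y ≠ some Pat.lin

/-- Splitting of an environment: nonlinear entries are shared, linear ones split. -/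
def Split (Γ Γ₁ Γ₂ : Env) : Prop := ∀ y,
  (Γ₁ y = Γ y ∧ Γ₂ y = Γ y ∧ Γ y ≠ some Pat.lin) ∨
  (Γ y = some Pat.lin ∧
    ((Γ₁ y = some Pat.lin ∧ Γ₂ y = none) ∨ (Γ₂ y = some Pat.lin ∧ Γ₁ y = none)))

/-- The inductive rules of the mixed formal system of ℓΛ∞, with `R` the
judgments provided by the coinductive layer. -/
inductive WFStep (R : Env → T → Prop) : Env → T → Prop
  | base {Γ M} : R Γ M → WFStep R Γ M
  | vl {Γ} (x) : OnlyLinAt Γ x → WFStep R Γ (mk0 (Shape.var x))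
  | vi {Γ} (x) : NoLin Γ → Γ x = some Pat.ind → WFStep R Γ (mk0 (Shape.var x))
  | vc {Γ} (x) : NoLin Γ → Γ x = some Pat.coi → WFStep R Γ (mk0 (Shape.var x))
  | app {Γ Γ₁ Γ₂ M N} : Split Γ Γ₁ Γ₂ → WFStep R Γ₁ M → WFStep R Γ₂ N →
      WFStep R Γ (mk2 M N)
  | ll {Γ x M} : Γ x = none → WFStep R (Γ.upd x (some Pat.lin)) M →
      WFStep R Γ (mk1 (Shape.labs x) M)
  | li {Γ x M} : Γ x = none → WFStep R (Γ.upd x (some Pat.ind)) M →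
      WFStep R Γ (mk1 (Shape.iabs x) M)
  | lc {Γ x M} : Γ x = none → WFStep R (Γ.upd x (some Pat.coi)) M →
      WFStep R Γ (mk1 (Shape.cabs x) M)
  | mi {Γ M} : NoLin Γ → WFStep R Γ M → WFStep R Γ (mk1 Shape.ibox M)

/-- One application of the unique coinductive rule (mc). -/
def CoStep (S : Env → T → Prop) (Γ : Env) (M : T) : Prop :=
  NoLin Γ ∧ ∃ N, M = mk1 Shape.cbox N ∧ S Γ N

/-- Well-formation in ℓΛ∞: greatest fixed point of Ind ∘ Coind, presented via
consistent sets. -/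
def WF (Γ : Env) (M : T) : Prop :=
  ∃ S : Env → T → Prop, (∀ Δ N, S Δ N → WFStep (CoStep S) Δ N) ∧ S Γ M

/-! ### Infinitary reduction ⇒ and its auxiliary relation ⤳ -/

/-- One application of the coinductive ⇒-rule. `true` marks ⇒-judgments,
`false` marks ⤳-judgments. -/
def IRCo (S : Bool → T → T → Prop) (b : Bool) (M L : T) : Prop :=
  b = true ∧ ∃ N, Star M N ∧ S false N L

/-- The inductive ⤳-rules. -/
inductive IRInd (R : Bool → T → T → Prop) : Bool → T → T → Prop
  | base {b M N} : R b M N → IRInd R b M N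
  | varr (x) : IRInd R false (mk0 (Shape.var x)) (mk0 (Shape.var x))
  | app {M N P Q} : IRInd R false M N → IRInd R false P Q →
      IRInd R false (mk2 M P) (mk2 N Q)
  | labs {M N} (x) : IRInd R false M N →
      IRInd R false (mk1 (Shape.labs x) M) (mk1 (Shape.labs x) N)
  | iabs {M N} (x) : IRInd R false M N →
      IRInd R false (mk1 (Shape.iabs x) M) (mk1 (Shape.iabs x) N)
  | cabs {M N} (x) : IRInd R false M N →
      IRInd R false (mk1 (Shape.cabs x) M) (mk1 (Shape.cabs x) N)
  | ibox {M N} : IRInd R false M N →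
      IRInd R false (mk1 Shape.ibox M) (mk1 Shape.ibox N)
  | cbox {M N} : IRInd R true M N →
      IRInd R false (mk1 Shape.cbox M) (mk1 Shape.cbox N)

def IRSys (b : Bool) (M N : T) : Prop :=
  ∃ S : Bool → T → T → Prop,
    (∀ b' M' N', S b' M' N' → IRInd (IRCo S) b' M' N') ∧ S b M N

/-- Infinitary reduction M ⇒ N. -/
def Inf (M N : T) : Prop := IRSys true M N

/-- Auxiliary relation M ⤳ N. -/
def Next (M N : T) : Prop := IRSys false M N

def NormalForm (N : T) : Prop := ∀ s P, ¬ Red s N P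

end LLInf
namespace LLInf

/-! ### The infinitary λ-calculus Λ_{00a} and its Girard-style embedding -/

/-- Inductive rules for membership in Λ_{00a}: when `a = true` the argument
premise goes through the coinductive guard `S`. -/
inductive LamStep (a : Bool) (S : T → Prop) : T → Prop
  | var (x) : LamStep a S (mk0 (Shape.var x))
  | app0 {M N} : a = false → LamStep a S M → LamStep a S N → LamStep a S (mk2 M N)
  | app1 {M N} : a = true → LamStep a S M → S N → LamStep a S (mk2 M N)
  | lam {M} (x) : LamStep a S M → LamStep a S (mk1 (Shape.labs x) M)

/-- `M` is a term of Λ_{00a} (the depth increasing in argument position iff `a`). -/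
def Lam00 (a : Bool) (M : T) : Prop :=
  ∃ S : T → Prop, (∀ N, S N → LamStep a S N) ∧ S M

/-- The Girard-style embedding ⟨·⟩ₐ of Λ_{00a} into ℓΛ∞, positionally:
⟨x⟩ = x, ⟨MN⟩ = ⟨M⟩(◻ₐ⟨N⟩), ⟨λx.M⟩ = λ◻ₐx.⟨M⟩. -/
def embF (a : Bool) : T → List ℕ → Option Shape
  | M, [] =>
      match M [] with
      | some (Shape.var x) => some (Shape.var x)
      | some Shape.app => some Shape.app
      | some (Shape.labs x) => some (if a then Shape.cabs x else Shape.iabs x)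
      | _ => none
  | M, i :: q =>
      match M [] with
      | some Shape.app =>
          if i = 0 then embF a (child M 0) q
          else if i = 1 then
            match q with
            | [] => some (if a then Shape.cbox else Shape.ibox)
            | j :: r => if j = 0 then embF a (child M 1) r else none
          else none
      | some (Shape.labs _) => if i = 0 then embF a (child M 0) q else none
      | _ => none
termination_by M p => p.length
decreasing_by all_goals (simp [List.length_cons]; try omega)

def emb (a : Bool) (M : T) : T := fun p => embF a M p

/-- Reduction at depth `n` in Λ_{00a}: the depth increases only when entering
the second argument of an application, and only when `a = true`. -/
inductive LRed (a : Bool) : ℕ → T → T → Prop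
  | beta (x M N) : LRed a 0 (mk2 (mk1 (Shape.labs x) M) N) (subst x N M)
  | appL {n M N} (P) : LRed a n M N → LRed a n (mk2 M P) (mk2 N P)
  | lam {n M N} (x) : LRed a n M N →
      LRed a n (mk1 (Shape.labs x) M) (mk1 (Shape.labs x) N)
  | appR0 {n M N} (P) : a = false → LRed a n M N → LRed a n (mk2 P M) (mk2 P N)
  | appR1 {n M N} (P) : a = true → LRed a n M N → LRed a (n + 1) (mk2 P M) (mk2 P N)

/-- The environment ◻ₐ(FV(M)): every free variable of `M`, marked inductive
(a = false) or coinductive (a = true). -/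
noncomputable def envOf (a : Bool) (M : T) : Env := fun y =>
  @ite _ (Free y M) (Classical.dec _) (some (if a then Pat.coi else Pat.ind)) none

/-- The defining (guarded) equations of capture-avoiding substitution. -/
def SubstEqs (f : ℕ → T → T → T) : Prop :=
  ∀ x (N : T),
    f x N (mk0 (Shape.var x)) = N ∧
    (∀ y, y ≠ x → f x N (mk0 (Shape.var y)) = mk0 (Shape.var y)) ∧
    (∀ M P, f x N (mk2 M P) = mk2 (f x N M) (f x N P)) ∧
    (∀ y M, y ≠ x → f x N (mk1 (Shape.labs y) M) = mk1 (Shape.labs y) (f x N M)) ∧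
    (∀ M, f x N (mk1 (Shape.labs x) M) = mk1 (Shape.labs x) M) ∧
    (∀ y M, y ≠ x → f x N (mk1 (Shape.iabs y) M) = mk1 (Shape.iabs y) (f x N M)) ∧
    (∀ M, f x N (mk1 (Shape.iabs x) M) = mk1 (Shape.iabs x) M) ∧
    (∀ y M, y ≠ x → f x N (mk1 (Shape.cabs y) M) = mk1 (Shape.cabs y) (f x N M)) ∧
    (∀ M, f x N (mk1 (Shape.cabs x) M) = mk1 (Shape.cabs x) M) ∧
    (∀ M, f x N (mk1 Shape.ibox M) = mk1 Shape.ibox (f x N M)) ∧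
    (∀ M, f x N (mk1 Shape.cbox M) = mk1 Shape.cbox (f x N M))

end LLInf
namespace LLInf

/-! ### The calculus ℓΛ∞^{4S} -/

/-- Patterns of ℓΛ∞^{4S}: x, ↓x, !x, ↑x, #x. -/
inductive Pat4 where
  | lin | dm | im | cm | am
deriving DecidableEq

def Env4 : Type := ℕ → Option Pat4

def Env4.upd (Γ : Env4) (x : ℕ) (p : Option Pat4) : Env4 :=
  fun y => if y = x then p else Γ y

/-- Patterns shared between the premises of applications: ↓, ↑, #. -/
def Shared4 (p : Option Pat4) : Prop :=
  p = some Pat4.dm ∨ p = some Pat4.cm ∨ p = some Pat4.am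

/-- Environment containing only ↓, ↑, # patterns. -/
def Passive4 (Γ : Env4) : Prop := ∀ y, Γ y = none ∨ Shared4 (Γ y)

def Split4 (Γ Γ₁ Γ₂ : Env4) : Prop := ∀ y,
  (Shared4 (Γ y) ∧ Γ₁ y = Γ y ∧ Γ₂ y = Γ y) ∨
  (Γ y = none ∧ Γ₁ y = none ∧ Γ₂ y = none) ∨
  ((Γ y = some Pat4.lin ∨ Γ y = some Pat4.im) ∧
    ((Γ₁ y = Γ y ∧ Γ₂ y = none) ∨ (Γ₂ y = Γ y ∧ Γ₁ y = none)))

/-- Environment transformation of the (mi) rule: conclusion ↓Θ,!Ξ,↑Ψ,#Φ ⊢ !M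
from premise Ξ,↑Ψ,#Φ ⊢ M. -/
def MiEnv (Γ Γ' : Env4) : Prop := ∀ y,
  (Γ y = some Pat4.im ∧ Γ' y = some Pat4.lin) ∨
  (Γ y = some Pat4.cm ∧ Γ' y = some Pat4.cm) ∨
  (Γ y = some Pat4.am ∧ Γ' y = some Pat4.am) ∨
  (Γ y = some Pat4.dm ∧ Γ' y = none) ∨
  (Γ y = none ∧ Γ' y = none)

/-- Environment transformation of the coinductive (mc) rule: conclusion
↓Θ,↑Ξ,#Ψ ⊢ §M from premise #Ξ,#Ψ ⊢ M. -/
def McEnv (Γ Γ' : Env4) : Prop := ∀ y,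
  (Γ y = some Pat4.cm ∧ Γ' y = some Pat4.am) ∨
  (Γ y = some Pat4.am ∧ Γ' y = some Pat4.am) ∨
  (Γ y = some Pat4.dm ∧ Γ' y = none) ∨
  (Γ y = none ∧ Γ' y = none)

/-- The inductive well-formation rules of ℓΛ∞^{4S}. -/
inductive WF4Step (R : Env4 → T → Prop) : Env4 → T → Prop
  | base {Γ M} : R Γ M → WF4Step R Γ M
  | vl {Γ} (x) : Γ x = some Pat4.lin → Passive4 (Γ.upd x none) →
      WF4Step R Γ (mk0 (Shape.var x))
  | vd {Γ} (x) : Γ x = some Pat4.dm → Passive4 Γ → WF4Step R Γ (mk0 (Shape.var x))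
  | va {Γ} (x) : Γ x = some Pat4.am → Passive4 Γ → WF4Step R Γ (mk0 (Shape.var x))
  | app {Γ Γ₁ Γ₂ M N} : Split4 Γ Γ₁ Γ₂ → WF4Step R Γ₁ M → WF4Step R Γ₂ N →
      WF4Step R Γ (mk2 M N)
  | ll {Γ x M} : Γ x = none → WF4Step R (Γ.upd x (some Pat4.lin)) M →
      WF4Step R Γ (mk1 (Shape.labs x) M)
  | li1 {Γ x M} : Γ x = none → WF4Step R (Γ.upd x (some Pat4.dm)) M →
      WF4Step R Γ (mk1 (Shape.iabs x) M)
  | li2 {Γ x M} : Γ x = none → WF4Step R (Γ.upd x (some Pat4.im)) M →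
      WF4Step R Γ (mk1 (Shape.iabs x) M)
  | lc {Γ x M} : Γ x = none → WF4Step R (Γ.upd x (some Pat4.cm)) M →
      WF4Step R Γ (mk1 (Shape.cabs x) M)
  | mi {Γ Γ' M} : MiEnv Γ Γ' → WF4Step R Γ' M → WF4Step R Γ (mk1 Shape.ibox M)

/-- One application of the coinductive rule (mc) of ℓΛ∞^{4S}. -/
def CoStep4 (S : Env4 → T → Prop) (Γ : Env4) (M : T) : Prop :=
  ∃ Γ' N, McEnv Γ Γ' ∧ M = mk1 Shape.cbox N ∧ S Γ' N

/-- Well-formation in ℓΛ∞^{4S}. -/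
def WF4 (Γ : Env4) (M : T) : Prop :=
  ∃ S : Env4 → T → Prop, (∀ Δ N, S Δ N → WF4Step (CoStep4 S) Δ N) ∧ S Γ M

/-! ### Sizes, free occurrences, duplicability factors and weights -/

/-- The defining equations of the size |M|ₘ at depth m, as a relation. -/
inductive SizeRel : T → ℕ → ℕ → Prop
  | var0 (x) : SizeRel (mk0 (Shape.var x)) 0 1
  | ibox0 {M n} : SizeRel M 0 n → SizeRel (mk1 Shape.ibox M) 0 (n + 1)
  | cbox0 (M) : SizeRel (mk1 Shape.cbox M) 0 0
  | app0 {M N n p} : SizeRel M 0 n → SizeRel N 0 p →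
      SizeRel (mk2 M N) 0 (n + p + 1)
  | labs0 {M n} (x) : SizeRel M 0 n → SizeRel (mk1 (Shape.labs x) M) 0 (n + 1)
  | iabs0 {M n} (x) : SizeRel M 0 n → SizeRel (mk1 (Shape.iabs x) M) 0 (n + 1)
  | cabs0 {M n} (x) : SizeRel M 0 n → SizeRel (mk1 (Shape.cabs x) M) 0 (n + 1)
  | varS (x m) : SizeRel (mk0 (Shape.var x)) (m + 1) 0
  | iboxS {M m n} : SizeRel M (m + 1) n → SizeRel (mk1 Shape.ibox M) (m + 1) n
  | cboxS {M m n} : SizeRel M m n → SizeRel (mk1 Shape.cbox M) (m + 1) n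
  | appS {M N m n p} : SizeRel M (m + 1) n → SizeRel N (m + 1) p →
      SizeRel (mk2 M N) (m + 1) (n + p)
  | labsS {M m n} (x) : SizeRel M (m + 1) n → SizeRel (mk1 (Shape.labs x) M) (m + 1) n
  | iabsS {M m n} (x) : SizeRel M (m + 1) n → SizeRel (mk1 (Shape.iabs x) M) (m + 1) n
  | cabsS {M m n} (x) : SizeRel M (m + 1) n → SizeRel (mk1 (Shape.cabs x) M) (m + 1) n

/-- Number of free occurrences of `x`, as a relation. -/
inductive NFO (x : ℕ) : T → ℕ → Prop
  | varEq : NFO x (mk0 (Shape.var x)) 1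
  | varNe {y} : y ≠ x → NFO x (mk0 (Shape.var y)) 0
  | app {M N n p} : NFO x M n → NFO x N p → NFO x (mk2 M N) (n + p)
  | labsSh (M) : NFO x (mk1 (Shape.labs x) M) 0
  | labs {y M n} : y ≠ x → NFO x M n → NFO x (mk1 (Shape.labs y) M) n
  | iabsSh (M) : NFO x (mk1 (Shape.iabs x) M) 0
  | iabs {y M n} : y ≠ x → NFO x M n → NFO x (mk1 (Shape.iabs y) M) n
  | cabsSh (M) : NFO x (mk1 (Shape.cabs x) M) 0
  | cabs {y M n} : y ≠ x → NFO x M n → NFO x (mk1 (Shape.cabs y) M) n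
  | ibox {M n} : NFO x M n → NFO x (mk1 Shape.ibox M) n
  | cbox {M n} : NFO x M n → NFO x (mk1 Shape.cbox M) n
  | cboxNot {M} : ¬ Free x M → NFO x (mk1 Shape.cbox M) 0

/-- The defining equations of the duplicability factor Dₘ(M), as a relation. -/
inductive DRel : T → ℕ → ℕ → Prop
  | var0 (x) : DRel (mk0 (Shape.var x)) 0 1
  | ibox0 {M d} : DRel M 0 d → DRel (mk1 Shape.ibox M) 0 d
  | cbox0 (M) : DRel (mk1 Shape.cbox M) 0 1
  | app0 {M N d e} : DRel M 0 d → DRel N 0 e → DRel (mk2 M N) 0 (max d e)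
  | labs0 {M d} (x) : DRel M 0 d → DRel (mk1 (Shape.labs x) M) 0 d
  | cabs0 {M d} (x) : DRel M 0 d → DRel (mk1 (Shape.cabs x) M) 0 d
  | iabs0 {x M k d} : NFO x M k → DRel M 0 d →
      DRel (mk1 (Shape.iabs x) M) 0 (max k d)
  | varS (x m) : DRel (mk0 (Shape.var x)) (m + 1) 1
  | iboxS {M m d} : DRel M (m + 1) d → DRel (mk1 Shape.ibox M) (m + 1) d
  | cboxS {M m d} : DRel M m d → DRel (mk1 Shape.cbox M) (m + 1) d
  | appS {M N m d e} : DRel M (m + 1) d → DRel N (m + 1) e →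
      DRel (mk2 M N) (m + 1) (max d e)
  | labsS {M m d} (x) : DRel M (m + 1) d → DRel (mk1 (Shape.labs x) M) (m + 1) d
  | iabsS {M m d} (x) : DRel M (m + 1) d → DRel (mk1 (Shape.iabs x) M) (m + 1) d
  | cabsS {M m d} (x) : DRel M (m + 1) d → DRel (mk1 (Shape.cabs x) M) (m + 1) d

/-- The defining equations of the n-weight wⁿₘ(M), as a relation. -/
inductive WRel (n : ℕ) : T → ℕ → ℕ → Prop
  | var0 (x) : WRel n (mk0 (Shape.var x)) 0 1
  | ibox0 {M w} : WRel n M 0 w → WRel n (mk1 Shape.ibox M) 0 (n * w)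
  | cbox0 (M) : WRel n (mk1 Shape.cbox M) 0 0
  | app0 {M N w v} : WRel n M 0 w → WRel n N 0 v → WRel n (mk2 M N) 0 (w + v)
  | labs0 {M w} (x) : WRel n M 0 w → WRel n (mk1 (Shape.labs x) M) 0 (w + 1)
  | iabs0 {M w} (x) : WRel n M 0 w → WRel n (mk1 (Shape.iabs x) M) 0 (w + 1)
  | cabs0 {M w} (x) : WRel n M 0 w → WRel n (mk1 (Shape.cabs x) M) 0 (w + 1)
  | varS (x m) : WRel n (mk0 (Shape.var x)) (m + 1) 0
  | iboxS {M m w} : WRel n M (m + 1) w → WRel n (mk1 Shape.ibox M) (m + 1) w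
  | cboxS {M m w} : WRel n M m w → WRel n (mk1 Shape.cbox M) (m + 1) w
  | appS {M N m w v} : WRel n M (m + 1) w → WRel n N (m + 1) v →
      WRel n (mk2 M N) (m + 1) (w + v)
  | labsS {M m w} (x) : WRel n M (m + 1) w → WRel n (mk1 (Shape.labs x) M) (m + 1) w
  | iabsS {M m w} (x) : WRel n M (m + 1) w → WRel n (mk1 (Shape.iabs x) M) (m + 1) w
  | cabsS {M m w} (x) : WRel n M (m + 1) w → WRel n (mk1 (Shape.cabs x) M) (m + 1) w

/-- Wₘ(M) = w^{Dₘ(M)}ₘ(M): the weight of `M` at depth `m`. -/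
def TW (M : T) (m w : ℕ) : Prop := ∃ d, DRel M m d ∧ WRel d M m w

end LLInf

namespace LLInf

/-! ### Auxiliary infrastructure for the postponement theorem -/

/-- bottom preterm -/
def bot : T := fun _ => none

@[simp] lemma bot_apply (p : List ℕ) : bot p = none := rfl

lemma child_apply (M : T) (i : ℕ) (p : List ℕ) : child M i p = M (i :: p) := rfl

@[simp] lemma mk2_nil (M N : T) : mk2 M N [] = some Shape.app := rfl
@[simp] lemma mk2_zero (M N : T) (p : List ℕ) : mk2 M N (0 :: p) = M p := rfl
@[simp] lemma mk2_one (M N : T) (p : List ℕ) : mk2 M N (1 :: p) = N p := rfl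
@[simp] lemma mk1_nil (s : Shape) (M : T) : mk1 s M [] = some s := rfl
@[simp] lemma mk1_zero (s : Shape) (M : T) (p : List ℕ) : mk1 s M (0 :: p) = M p := rfl
@[simp] lemma mk0_nil (s : Shape) : mk0 s [] = some s := rfl

lemma mk2_apply (M N : T) (p : List ℕ) :
    mk2 M N p = match p with
      | [] => some Shape.app
      | 0 :: q => M q
      | 1 :: q => N q
      | _ => none := rfl

lemma mk1_apply (s : Shape) (M : T) (p : List ℕ) :
    mk1 s M p = match p with
      | [] => some s
      | 0 :: q => M q
      | _ => none := rfl

lemma mk2_inj {M N M' N' : T} (h : mk2 M N = mk2 M' N') : M = M' ∧ N = N' := by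
  constructor <;> funext p
  · exact congrFun h (0 :: p)
  · exact congrFun h (1 :: p)

lemma mk1_inj {s s' : Shape} {M M' : T} (h : mk1 s M = mk1 s' M') : s = s' ∧ M = M' := by
  constructor
  · have := congrFun h []; simpa using this
  · funext p; exact congrFun h (0 :: p)

lemma mk0_inj {s s' : Shape} (h : mk0 s = mk0 s') : s = s' := by
  have := congrFun h []; simpa using this

lemma mk1_ne_mk2 {s : Shape} {M A B : T} (hs : s ≠ Shape.app) : mk1 s M ≠ mk2 A B := by
  intro h; exact hs (by simpa using congrFun h [])

lemma mk0_ne_mk2 {s : Shape} {A B : T} (hs : s ≠ Shape.app) : mk0 s ≠ mk2 A B := by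
  intro h; exact hs (by simpa using congrFun h [])

lemma mk0_ne_mk1 {s s' : Shape} {M : T} (hs : s ≠ s') : mk0 s ≠ mk1 s' M := by
  intro h; exact hs (by simpa using congrFun h [])

/-! ### substitution equations -/

lemma subst_apply (x : ℕ) (N M : T) (p : List ℕ) : subst x N M p = substF x N M p := rfl

lemma substF_nil (x : ℕ) (N M : T) :
    substF x N M [] = if M [] = some (Shape.var x) then N [] else M [] := by
  simp [substF]

lemma substF_cons (x : ℕ) (N M : T) (i : ℕ) (q : List ℕ) :
    substF x N M (i :: q) =
      if M [] = some (Shape.var x) then N (i :: q)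
      else if bindsX x (M []) then M (i :: q)
      else substF x N (child M i) q := by
  simp [substF]

lemma subst_root_var {x : ℕ} {M : T} (h : M [] = some (Shape.var x)) (N : T) :
    subst x N M = N := by
  funext p
  cases p with
  | nil => simp [subst, substF_nil, h]
  | cons i q => simp [subst, substF_cons, h]

lemma subst_root_not_var {x : ℕ} {M : T} (h : M [] ≠ some (Shape.var x)) (N : T) :
    subst x N M [] = M [] := by simp [subst, substF_nil, h]

lemma subst_root_bind {x : ℕ} {M : T} (h : M [] ≠ some (Shape.var x))
    (hb : bindsX x (M []) = true) (N : T) : subst x N M = M := by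
  funext p
  cases p with
  | nil => simp [subst, substF_nil, h]
  | cons i q => simp [subst, substF_cons, h, hb]

lemma subst_root_rec {x : ℕ} {M : T} (h : M [] ≠ some (Shape.var x))
    (hb : bindsX x (M []) = false) (N : T) (i : ℕ) (q : List ℕ) :
    subst x N M (i :: q) = subst x N (child M i) q := by
  simp [subst, substF_cons, h, hb]

lemma subst_bot (x : ℕ) (N : T) : subst x N bot = bot := by
  funext p
  induction p generalizing N with
  | nil => simp [subst, substF_nil]
  | cons i q ih =>
      have : child bot i = bot := rfl
      simp only [subst] at ih ⊢
      rw [substF_cons]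
      simp only [bot_apply]
      erw [if_neg (show ¬ ((none : Option Shape) = some (Shape.var x)) by simp),
        if_neg (show ¬ (bindsX x none = true) by simp [bindsX]), this]
      exact ih N

lemma subst_mk2 (x : ℕ) (N A B : T) :
    subst x N (mk2 A B) = mk2 (subst x N A) (subst x N B) := by
  funext p
  match p with
  | [] => simp [subst, substF_nil]
  | 0 :: q =>
      rw [subst_apply, substF_cons]
      simp [bindsX]
      rfl
  | 1 :: q =>
      rw [subst_apply, substF_cons]
      simp [bindsX]
      rfl
  | (i+2) :: q =>
      rw [subst_apply, substF_cons]
      simp [bindsX]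
      have : child (mk2 A B) (i+2) = bot := by funext r; rfl
      rw [this]
      have := congrFun (subst_bot x N) q
      simp [subst] at this ⊢; exact this

lemma bindsX_eq_true_iff (x : ℕ) (s : Shape) :
    bindsX x (some s) = true ↔ s = Shape.labs x ∨ s = Shape.iabs x ∨ s = Shape.cabs x := by
  cases s <;> simp [bindsX]

lemma subst_mk1 {x : ℕ} {s : Shape} (hv : ∀ z, s ≠ Shape.var z)
    (hb : bindsX x (some s) = false) (N A : T) :
    subst x N (mk1 s A) = mk1 s (subst x N A) := by
  funext p
  match p with
  | [] => simp [subst, substF_nil, hv x]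
  | 0 :: q =>
      rw [subst_apply, substF_cons]
      simp [hv x, hb]
      rfl
  | (i+1) :: q =>
      rw [subst_apply, substF_cons]
      simp [hv x, hb]
      have : child (mk1 s A) (i+1) = bot := by funext r; rfl
      rw [this]
      have := congrFun (subst_bot x N) q
      simp [subst] at this ⊢; exact this

lemma subst_mk1_bind {x : ℕ} {s : Shape} (hv : ∀ z, s ≠ Shape.var z)
    (hb : bindsX x (some s) = true) (N A : T) :
    subst x N (mk1 s A) = mk1 s A :=
  subst_root_bind (by simp [hv x]) (by simpa using hb) N

lemma subst_mk0_self (x : ℕ) (N : T) : subst x N (mk0 (Shape.var x)) = N :=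
  subst_root_var (by simp) N

lemma subst_mk0_ne {x y : ℕ} (h : y ≠ x) (N : T) :
    subst x N (mk0 (Shape.var y)) = mk0 (Shape.var y) := by
  funext p
  match p with
  | [] => simp [subst, substF_nil, h]
  | i :: q =>
      rw [subst_apply, substF_cons]
      simp [h, bindsX]
      have : child (mk0 (Shape.var y)) i = bot := by funext r; rfl
      rw [this]
      have := congrFun (subst_bot x N) q
      simp only [subst] at this
      rw [this]
      rfl
/-! ### Mixed substitution -/

/-- Mixed substitution: substitute `C'` for free occurrences of `x` outside all
coinductive boxes, and `C` for occurrences inside coinductive boxes. -/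
def msubstF (x : ℕ) (C' C : T) : T → List ℕ → Option Shape
  | M, [] => if M [] = some (Shape.var x) then C' [] else M []
  | M, i :: q =>
      if M [] = some (Shape.var x) then C' (i :: q)
      else if bindsX x (M []) then M (i :: q)
      else if M [] = some Shape.cbox then substF x C (child M i) q
      else msubstF x C' C (child M i) q
termination_by M p => p.length

def msubst (x : ℕ) (C' C M : T) : T := fun p => msubstF x C' C M p

lemma msubstF_nil (x : ℕ) (C' C M : T) :
    msubstF x C' C M [] = if M [] = some (Shape.var x) then C' [] else M [] := by
  simp [msubstF]

lemma msubstF_cons (x : ℕ) (C' C M : T) (i : ℕ) (q : List ℕ) :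
    msubstF x C' C M (i :: q) =
      if M [] = some (Shape.var x) then C' (i :: q)
      else if bindsX x (M []) then M (i :: q)
      else if M [] = some Shape.cbox then substF x C (child M i) q
      else msubstF x C' C (child M i) q := by
  simp [msubstF]

lemma msubst_root_var {x : ℕ} {M : T} (h : M [] = some (Shape.var x)) (C' C : T) :
    msubst x C' C M = C' := by
  funext p
  cases p with
  | nil => simp [msubst, msubstF_nil, h]
  | cons i q => simp [msubst, msubstF_cons, h]

lemma msubst_bot (x : ℕ) (C' C : T) : msubst x C' C bot = bot := by
  funext p
  induction p with
  | nil => simp [msubst, msubstF_nil]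
  | cons i q ih =>
      rw [msubst, msubstF_cons]
      have hc : child bot i = bot := rfl
      simp only [bot_apply]
      erw [if_neg (show ¬ ((none : Option Shape) = some (Shape.var x)) by simp),
        if_neg (show ¬ (bindsX x none = true) by simp [bindsX]),
        if_neg (show ¬ ((none : Option Shape) = some Shape.cbox) by simp), hc]
      exact ih

lemma msubst_self (x : ℕ) (C M : T) : msubst x C C M = subst x C M := by
  funext p
  induction p generalizing M with
  | nil => simp [msubst, msubstF_nil, subst, substF_nil]
  | cons i q ih =>
      rw [msubst, msubstF_cons, subst_apply, substF_cons]
      by_cases h1 : M [] = some (Shape.var x)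
      · simp [h1]
      · by_cases h2 : bindsX x (M [])
        · simp [h1, h2]
        · by_cases h3 : M [] = some Shape.cbox
          · simp [h1, h2, h3]
          · simp [h1, h2, h3]; exact ih (child M i)

lemma msubst_mk2 (x : ℕ) (C' C A B : T) :
    msubst x C' C (mk2 A B) = mk2 (msubst x C' C A) (msubst x C' C B) := by
  funext p
  match p with
  | [] => simp [msubst, msubstF_nil]
  | 0 :: q => rw [msubst, msubstF_cons]; simp [bindsX]; rfl
  | 1 :: q => rw [msubst, msubstF_cons]; simp [bindsX]; rfl
  | (i+2) :: q =>
      rw [msubst, msubstF_cons]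
      simp only [mk2_nil, bindsX]
      erw [if_neg (show ¬ (some Shape.app = some (Shape.var x)) by simp),
        if_neg (show ¬ (false = true) by simp),
        if_neg (show ¬ (some Shape.app = some Shape.cbox) by simp)]
      have hb : child (mk2 A B) (i+2) = bot := by funext r; rfl
      rw [hb]
      have := congrFun (msubst_bot x C' C) q
      simp only [msubst] at this
      rw [this]; rfl

lemma msubst_mk1 {x : ℕ} {s : Shape} (hv : ∀ z, s ≠ Shape.var z)
    (hb : bindsX x (some s) = false) (hc : s ≠ Shape.cbox) (C' C A : T) :
    msubst x C' C (mk1 s A) = mk1 s (msubst x C' C A) := by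
  funext p
  match p with
  | [] => simp [msubst, msubstF_nil, hv x]
  | 0 :: q =>
      rw [msubst, msubstF_cons]
      simp [hv x, hb, hc]
      rfl
  | (i+1) :: q =>
      rw [msubst, msubstF_cons]
      simp only [mk1_nil]
      erw [if_neg (show ¬ (some s = some (Shape.var x)) by simp [hv x]),
        if_neg (show ¬ (bindsX x (some s) = true) by simp [hb]),
        if_neg (show ¬ (some s = some Shape.cbox) by simp [hc])]
      have h2 : child (mk1 s A) (i+1) = bot := by funext r; rfl
      rw [h2]
      have := congrFun (msubst_bot x C' C) q
      simp only [msubst] at this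
      rw [this]; rfl

lemma msubst_mk1_bind {x : ℕ} {s : Shape} (hv : ∀ z, s ≠ Shape.var z)
    (hb : bindsX x (some s) = true) (C' C A : T) :
    msubst x C' C (mk1 s A) = mk1 s A := by
  funext p
  cases p with
  | nil => simp [msubst, msubstF_nil, hv x]
  | cons i q =>
      rw [msubst, msubstF_cons]
      simp [hv x, hb]

lemma msubst_cbox (x : ℕ) (C' C A : T) :
    msubst x C' C (mk1 Shape.cbox A) = mk1 Shape.cbox (subst x C A) := by
  funext p
  match p with
  | [] => simp [msubst, msubstF_nil]
  | 0 :: q =>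
      rw [msubst, msubstF_cons]
      simp [bindsX]
      rfl
  | (i+1) :: q =>
      rw [msubst, msubstF_cons]
      have h2 : child (mk1 Shape.cbox A) (i+1) = bot := by funext r; rfl
      have h3 := congrFun (subst_bot x C) q
      simp only [subst] at h3
      simp [bindsX, h2, h3, mk1_apply]

lemma msubst_mk0_ne {x y : ℕ} (h : y ≠ x) (C' C : T) :
    msubst x C' C (mk0 (Shape.var y)) = mk0 (Shape.var y) := by
  funext p
  cases p with
  | nil => simp [msubst, msubstF_nil, h]
  | cons i q =>
      rw [msubst, msubstF_cons]
      simp only [mk0_nil]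
      erw [if_neg (show ¬ (some (Shape.var y) = some (Shape.var x)) by simp [h]),
        if_neg (show ¬ (bindsX x (some (Shape.var y)) = true) by simp [bindsX]),
        if_neg (show ¬ (some (Shape.var y) = some Shape.cbox) by simp)]
      have h2 : child (mk0 (Shape.var y)) i = bot := by funext r; rfl
      rw [h2]
      have := congrFun (msubst_bot x C' C) q
      simp only [msubst] at this
      rw [this]; rfl

/-! ### Positions, free and bound variables -/

/-- Subtree of `A` at position `r`. -/
def sub (A : T) (r : List ℕ) : T := fun q => A (r ++ q)

@[simp] lemma sub_nil (A : T) : sub A [] = A := rfl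

lemma sub_apply (A : T) (r q : List ℕ) : sub A r q = A (r ++ q) := rfl

lemma sub_sub (A : T) (r q : List ℕ) : sub (sub A r) q = sub A (r ++ q) := by
  funext p; simp [sub, List.append_assoc]

lemma child_eq_sub (A : T) (i : ℕ) : child A i = sub A [i] := rfl

/-- `y` is bound somewhere in `A`. -/
def BoundIn (y : ℕ) (A : T) : Prop := ∃ p, bindsX y (A p) = true

/-- The path `p` crosses a coinductive box in `A`. -/
def CrossC (A : T) (p : List ℕ) : Prop :=
  ∃ p₁ i p₂, p = p₁ ++ i :: p₂ ∧ A p₁ = some Shape.cbox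

/-- No binder of `x` occurs on the way to position `p`. -/
def NoXA (x : ℕ) (A : T) (p : List ℕ) : Prop :=
  ∀ p₁ i p₂, p = p₁ ++ i :: p₂ → bindsX x (A p₁) = false

/-- All free occurrences of `x` in `A` are inside coinductive boxes. -/
def NFF (x : ℕ) (A : T) : Prop := ∀ p, FreeAt x A p → CrossC A p

/-- The condition on bound variables of `A` relative to the substitution
`[x := C]`, needed for postponement. -/
def CONDW (x : ℕ) (C : T) (A : T) : Prop :=
  ∀ p y, A p = some Shape.cbox → NoXA x A p →
    Free x (sub A (p ++ [0])) → BoundIn y (sub A (p ++ [0])) →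
    ¬ Free y C ∧ y ≠ x

lemma freeAt_nil {y : ℕ} {M : T} : FreeAt y M [] ↔ M [] = some (Shape.var y) := by
  simp [FreeAt]

lemma freeAt_cons {y : ℕ} {M : T} {i : ℕ} {q : List ℕ} :
    FreeAt y M (i :: q) ↔ bindsX y (M []) = false ∧ FreeAt y (child M i) q := by
  simp [FreeAt]

lemma boundIn_sub {y : ℕ} {A : T} {r : List ℕ} (h : BoundIn y (sub A r)) : BoundIn y A := by
  obtain ⟨p, hp⟩ := h
  exact ⟨r ++ p, hp⟩

lemma boundIn_child {y : ℕ} {A : T} {i : ℕ} (h : BoundIn y (child A i)) : BoundIn y A := by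
  rw [child_eq_sub] at h; exact boundIn_sub h

lemma freeAt_sub_append {y : ℕ} {A : T} {r q : List ℕ}
    (hb : ∀ p₁ i p₂, r = p₁ ++ i :: p₂ → bindsX y (A p₁) = false)
    (h : FreeAt y (sub A r) q) : FreeAt y A (r ++ q) := by
  induction r generalizing A with
  | nil => simpa using h
  | cons j r' ih =>
      rw [List.cons_append, freeAt_cons]
      refine ⟨hb [] j r' rfl, ?_⟩
      have hsub : sub A (j :: r') = sub (child A j) r' := by
        rw [child_eq_sub, sub_sub]; rfl
      rw [hsub] at h
      exact ih (fun p₁ i p₂ he => hb (j :: p₁) i p₂ (by rw [he]; rfl)) h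

/-! ### Substitution, free and bound occurrences -/

lemma subst_pos (x : ℕ) (N M : T) (p : List ℕ) :
    subst x N M p = M p ∨ ∃ q, subst x N M p = N q := by
  induction p generalizing M with
  | nil =>
      rw [subst_apply, substF_nil]
      by_cases h : M [] = some (Shape.var x)
      · exact Or.inr ⟨[], by simp [h]⟩
      · simp [h]
  | cons i q ih =>
      rw [subst_apply, substF_cons]
      by_cases h1 : M [] = some (Shape.var x)
      · exact Or.inr ⟨i :: q, by simp [h1]⟩
      · by_cases h2 : bindsX x (M [])
        · simp [h1, h2]
        · simp only [h1, h2, if_false, if_neg h1, Bool.false_eq_true, if_neg h2]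
          rcases ih (child M i) with h | ⟨r, hr⟩
          · exact Or.inl h
          · exact Or.inr ⟨r, hr⟩

lemma msubst_pos (x : ℕ) (C' C M : T) (p : List ℕ) :
    msubst x C' C M p = M p ∨ (∃ q, msubst x C' C M p = C' q) ∨
      (∃ q, msubst x C' C M p = C q) := by
  induction p generalizing M with
  | nil =>
      rw [msubst, msubstF_nil]
      by_cases h : M [] = some (Shape.var x)
      · exact Or.inr (Or.inl ⟨[], by simp [h]⟩)
      · simp [h]
  | cons i q ih =>
      rw [msubst, msubstF_cons]
      by_cases h1 : M [] = some (Shape.var x)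
      · exact Or.inr (Or.inl ⟨i :: q, by simp [h1]⟩)
      · by_cases h2 : bindsX x (M [])
        · simp [h1, h2]
        · by_cases h3 : M [] = some Shape.cbox
          · simp only [if_neg h1, Bool.false_eq_true, if_neg h2, if_pos h3]
            rcases subst_pos x C (child M i) q with h | ⟨r, hr⟩
            · exact Or.inl h
            · exact Or.inr (Or.inr ⟨r, hr⟩)
          · simp only [if_neg h1, Bool.false_eq_true, if_neg h2, if_neg h3]
            exact ih (child M i)

lemma boundIn_subst {y x : ℕ} {N M : T} (h : BoundIn y (subst x N M)) :
    BoundIn y M ∨ BoundIn y N := by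
  obtain ⟨p, hp⟩ := h
  rcases subst_pos x N M p with he | ⟨q, he⟩
  · exact Or.inl ⟨p, he ▸ hp⟩
  · exact Or.inr ⟨q, he ▸ hp⟩

lemma subst_not_free {x : ℕ} {M : T} (h : ¬ Free x M) (N : T) : subst x N M = M := by
  funext p
  induction p generalizing M with
  | nil =>
      rw [subst_apply, substF_nil, if_neg]
      intro hc
      exact h ⟨[], freeAt_nil.2 hc⟩
  | cons i q ih =>
      rw [subst_apply, substF_cons]
      have h1 : M [] ≠ some (Shape.var x) := fun hc => h ⟨[], freeAt_nil.2 hc⟩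
      rw [if_neg h1]
      by_cases h2 : bindsX x (M [])
      · simp [h2]
      · simp only [Bool.false_eq_true, if_neg h2]
        exact ih (fun ⟨r, hr⟩ =>
          h ⟨i :: r, freeAt_cons.2 ⟨Bool.not_eq_true _ ▸ h2, hr⟩⟩)

lemma msubst_not_free {x : ℕ} {M : T} (h : ¬ Free x M) (C' C : T) :
    msubst x C' C M = M := by
  funext p
  induction p generalizing M with
  | nil =>
      rw [msubst, msubstF_nil, if_neg]
      intro hc
      exact h ⟨[], freeAt_nil.2 hc⟩
  | cons i q ih =>
      rw [msubst, msubstF_cons]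
      have h1 : M [] ≠ some (Shape.var x) := fun hc => h ⟨[], freeAt_nil.2 hc⟩
      rw [if_neg h1]
      by_cases h2 : bindsX x (M [])
      · simp [h2]
      · have hfc : ¬ Free x (child M i) := fun ⟨r, hr⟩ =>
          h ⟨i :: r, freeAt_cons.2 ⟨Bool.not_eq_true _ ▸ h2, hr⟩⟩
        by_cases h3 : M [] = some Shape.cbox
        · simp only [Bool.false_eq_true, if_neg h2, if_pos h3]
          have := congrFun (subst_not_free hfc C) q
          simp [subst] at this ⊢; exact this
        · simp only [Bool.false_eq_true, if_neg h2, if_neg h3]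
          exact ih hfc

lemma crossC_cons {A : T} {i : ℕ} {q : List ℕ} (h : CrossC A (i :: q))
    (hroot : A [] ≠ some Shape.cbox) : CrossC (child A i) q := by
  obtain ⟨p₁, j, p₂, he, hc⟩ := h
  cases p₁ with
  | nil => exact absurd (by simpa using hc) (by simpa using hroot)
  | cons k p₁' =>
      rw [List.cons_append] at he
      injection he with h1 h2
      subst h1; subst h2
      exact ⟨p₁', j, p₂, rfl, hc⟩

lemma crossC_lift {A : T} {i : ℕ} {q : List ℕ} (h : CrossC (child A i) q) :
    CrossC A (i :: q) := by
  obtain ⟨p₁, j, p₂, he, hc⟩ := h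
  exact ⟨i :: p₁, j, p₂, by rw [he]; rfl, hc⟩

lemma msubst_nff {x : ℕ} {M : T} (h : NFF x M) (C' C : T) :
    msubst x C' C M = subst x C M := by
  funext p
  induction p generalizing M with
  | nil =>
      rw [msubst, msubstF_nil, subst_apply, substF_nil]
      by_cases h1 : M [] = some (Shape.var x)
      · obtain ⟨p₁, i, p₂, he, -⟩ := h [] (freeAt_nil.2 h1)
        exact absurd he (by simp)
      · simp [h1]
  | cons i q ih =>
      rw [msubst, msubstF_cons, subst_apply, substF_cons]
      by_cases h1 : M [] = some (Shape.var x)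
      · obtain ⟨p₁, j, p₂, he, -⟩ := h [] (freeAt_nil.2 h1)
        exact absurd he (by simp)
      · rw [if_neg h1, if_neg h1]
        by_cases h2 : bindsX x (M [])
        · simp [h2]
        · simp only [Bool.false_eq_true, if_neg h2]
          by_cases h3 : M [] = some Shape.cbox
          · simp [h3]
          · rw [if_neg h3]
            exact ih (fun r hr => crossC_cons
              (h (i :: r) (freeAt_cons.2 ⟨Bool.not_eq_true _ ▸ h2, hr⟩)) h3) 
/-! ### Free/bound occurrences in constructors -/

lemma freeAt_bot {y : ℕ} {p : List ℕ} : ¬ FreeAt y bot p := by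
  induction p with
  | nil => simp [freeAt_nil]
  | cons i q ih => rw [freeAt_cons]; rintro ⟨-, h⟩; exact ih h

lemma boundIn_mk2 {y : ℕ} {A B : T} :
    BoundIn y (mk2 A B) ↔ BoundIn y A ∨ BoundIn y B := by
  constructor
  · rintro ⟨p, hp⟩
    match p with
    | [] => simp [bindsX] at hp
    | 0 :: q => exact Or.inl ⟨q, hp⟩
    | 1 :: q => exact Or.inr ⟨q, hp⟩
    | (i+2) :: q => simp [mk2_apply, bindsX] at hp
  · rintro (⟨p, hp⟩ | ⟨p, hp⟩)
    · exact ⟨0 :: p, hp⟩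
    · exact ⟨1 :: p, hp⟩

lemma boundIn_mk1 {y : ℕ} {s : Shape} {A : T} :
    BoundIn y (mk1 s A) ↔ bindsX y (some s) = true ∨ BoundIn y A := by
  constructor
  · rintro ⟨p, hp⟩
    match p with
    | [] => exact Or.inl hp
    | 0 :: q => exact Or.inr ⟨q, hp⟩
    | (i+1) :: q => simp [mk1_apply, bindsX] at hp
  · rintro (h | ⟨p, hp⟩)
    · exact ⟨[], h⟩
    · exact ⟨0 :: p, hp⟩

lemma free_mk2 {y : ℕ} {A B : T} :
    Free y (mk2 A B) ↔ Free y A ∨ Free y B := by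
  constructor
  · rintro ⟨p, hp⟩
    match p with
    | [] => simp [freeAt_nil] at hp
    | 0 :: q => rw [freeAt_cons] at hp; exact Or.inl ⟨q, hp.2⟩
    | 1 :: q => rw [freeAt_cons] at hp; exact Or.inr ⟨q, hp.2⟩
    | (i+2) :: q =>
        rw [freeAt_cons] at hp
        have : child (mk2 A B) (i+2) = bot := by funext r; rfl
        rw [this] at hp
        exact absurd hp.2 freeAt_bot
  · rintro (⟨p, hp⟩ | ⟨p, hp⟩)
    · exact ⟨0 :: p, freeAt_cons.2 ⟨by simp [bindsX], hp⟩⟩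
    · exact ⟨1 :: p, freeAt_cons.2 ⟨by simp [bindsX], hp⟩⟩

lemma free_mk1 {y : ℕ} {s : Shape} {A : T} (hv : ∀ z, s ≠ Shape.var z) :
    Free y (mk1 s A) ↔ bindsX y (some s) = false ∧ Free y A := by
  constructor
  · rintro ⟨p, hp⟩
    match p with
    | [] => rw [freeAt_nil] at hp; exact absurd (by simpa using hp) (hv y)
    | 0 :: q => rw [freeAt_cons] at hp; exact ⟨hp.1, ⟨q, hp.2⟩⟩
    | (i+1) :: q =>
        rw [freeAt_cons] at hp
        have : child (mk1 s A) (i+1) = bot := by funext r; rfl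
        rw [this] at hp
        exact absurd hp.2 freeAt_bot
  · rintro ⟨h, p, hp⟩
    exact ⟨0 :: p, freeAt_cons.2 ⟨h, hp⟩⟩

lemma free_mk0 {y z : ℕ} : Free y (mk0 (Shape.var z)) ↔ y = z := by
  constructor
  · rintro ⟨p, hp⟩
    match p with
    | [] => rw [freeAt_nil] at hp; have := hp.symm; simp only [mk0_nil, Option.some.injEq, Shape.var.injEq] at this ⊢; exact this
    | i :: q =>
        rw [freeAt_cons] at hp
        have : child (mk0 (Shape.var z)) i = bot := by funext r; rfl
        rw [this] at hp
        exact absurd hp.2 freeAt_bot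
  · rintro rfl
    exact ⟨[], freeAt_nil.2 rfl⟩

lemma freeAt_subst {y x : ℕ} {N M : T} {p : List ℕ}
    (h : FreeAt y (subst x N M) p) : (y ≠ x ∧ Free y M) ∨ Free y N := by
  induction p generalizing M with
  | nil =>
      rw [freeAt_nil] at h
      by_cases h1 : M [] = some (Shape.var x)
      · rw [subst_root_var h1] at h
        exact Or.inr ⟨[], freeAt_nil.2 h⟩
      · rw [subst_root_not_var h1] at h
        refine Or.inl ⟨?_, ⟨[], freeAt_nil.2 h⟩⟩
        rintro rfl; exact h1 h
  | cons i q ih =>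
      by_cases h1 : M [] = some (Shape.var x)
      · rw [subst_root_var h1] at h
        exact Or.inr ⟨i :: q, h⟩
      · by_cases h2 : bindsX x (M [])
        · rw [subst_root_bind h1 h2] at h
          rw [freeAt_cons] at h
          refine Or.inl ⟨?_, ⟨i :: q, freeAt_cons.2 h⟩⟩
          rintro rfl; rw [h.1] at h2; cases h2
        · rw [freeAt_cons] at h
          have hroot : subst x N M [] = M [] := subst_root_not_var h1 N
          have hchild : child (subst x N M) i = subst x N (child M i) := by
            funext r; exact subst_root_rec h1 (by simpa using h2) N i r
          rw [hchild] at h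
          rcases ih h.2 with ⟨hyx, ⟨r, hr⟩⟩ | hN
          · exact Or.inl ⟨hyx, ⟨i :: r,
              freeAt_cons.2 ⟨by rw [← hroot]; exact h.1, hr⟩⟩⟩
          · exact Or.inr hN

lemma free_subst {y x : ℕ} {N M : T} (h : Free y (subst x N M)) :
    (y ≠ x ∧ Free y M) ∨ Free y N := by
  obtain ⟨p, hp⟩ := h; exact freeAt_subst hp

/-! ### Composition of substitutions -/

lemma subst_child {y : ℕ} {Q A : T} (h1 : A [] ≠ some (Shape.var y))
    (h2 : bindsX y (A []) = false) (i : ℕ) :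
    child (subst y Q A) i = subst y Q (child A i) := by
  funext r; exact subst_root_rec h1 h2 Q i r

lemma shape_binder_not_var {y : ℕ} {o : Option Shape} (h : bindsX y o = true) :
    ∀ z, o ≠ some (Shape.var z) := by
  rintro z rfl; simp [bindsX] at h

lemma subst_comp {x y : ℕ} (hxy : y ≠ x) {C Q A : T} (hfc : ¬ Free y C)
    (hnb : ∀ p, bindsX x (A p) = false) :
    subst x C (subst y Q A) = subst y (subst x C Q) (subst x C A) := by
  funext p
  induction p generalizing A with
  | nil =>
      by_cases h1 : A [] = some (Shape.var y)
      · rw [subst_root_var h1, subst_root_var (show subst x C A [] = some (Shape.var y) by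
          rw [subst_root_not_var (by rw [h1]; simp [hxy]) C]; exact h1)]
      · by_cases h2 : A [] = some (Shape.var x)
        · rw [subst_root_var (show subst y Q A [] = some (Shape.var x) by
            rw [subst_root_not_var h1 Q]; exact h2), subst_root_var h2]
          rw [subst_not_free hfc (subst x C Q)]
        · by_cases h3 : bindsX y (A [])
          · rw [subst_root_bind h1 h3]
            have hA : subst x C A [] = A [] := subst_root_not_var h2 C
            rw [subst_root_bind (fun hc => (shape_binder_not_var h3 y) (hA ▸ hc))
              (by rw [hA]; exact h3)]
          · rw [subst_apply, substF_nil, subst_root_not_var h1 Q,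
              subst_apply, substF_nil, subst_root_not_var h2 C]
            simp [h1, h2]
  | cons i q ih =>
      by_cases h1 : A [] = some (Shape.var y)
      · rw [subst_root_var h1, subst_root_var (show subst x C A [] = some (Shape.var y) by
          rw [subst_root_not_var (by rw [h1]; simp [hxy]) C]; exact h1)]
      · by_cases h2 : A [] = some (Shape.var x)
        · rw [subst_root_var (show subst y Q A [] = some (Shape.var x) by
            rw [subst_root_not_var h1 Q]; exact h2), subst_root_var h2]
          rw [subst_not_free hfc (subst x C Q)]
        · by_cases h3 : bindsX y (A [])
          · rw [subst_root_bind h1 h3]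
            have hA : subst x C A [] = A [] := subst_root_not_var h2 C
            rw [subst_root_bind (fun hc => (shape_binder_not_var h3 y) (hA ▸ hc))
              (by rw [hA]; exact h3)]
          · have h4 : bindsX x (A []) = false := hnb []
            have e1 : subst y Q A [] = A [] := subst_root_not_var h1 Q
            have e2 : subst x C A [] = A [] := subst_root_not_var h2 C
            rw [subst_root_rec (fun hc => h2 (e1 ▸ hc)) (by rw [e1]; exact h4) C i q,
              subst_child h1 (by simpa using h3) i,
              subst_root_rec (fun hc => h1 (e2 ▸ hc)) (by rw [e2]; simpa using h3)
                (subst x C Q) i q,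
              subst_child h2 h4 i]
            exact ih (fun r => hnb (i :: r))

/-! ### Reduction and substitution -/

lemma redex_bound_lin {z : ℕ} {B Q : T} : BoundIn z (mk2 (mk1 (Shape.labs z) B) Q) :=
  ⟨[0], by simp [bindsX]⟩

lemma red_boundIn {s : List Bool} {A A' : T} (h : Red s A A') :
    ∀ y, BoundIn y A' → BoundIn y A := by
  induction h with
  | base hb =>
      intro y hy
      cases hb with
      | lin z B Q =>
          rcases boundIn_subst hy with h | h
          · exact boundIn_mk2.2 (Or.inl (boundIn_mk1.2 (Or.inr h)))
          · exact boundIn_mk2.2 (Or.inr h)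
      | ind z B Q =>
          rcases boundIn_subst hy with h | h
          · exact boundIn_mk2.2 (Or.inl (boundIn_mk1.2 (Or.inr h)))
          · exact boundIn_mk2.2 (Or.inr (boundIn_mk1.2 (Or.inr h)))
      | coi z B Q =>
          rcases boundIn_subst hy with h | h
          · exact boundIn_mk2.2 (Or.inl (boundIn_mk1.2 (Or.inr h)))
          · exact boundIn_mk2.2 (Or.inr (boundIn_mk1.2 (Or.inr h)))
  | appL P _ ih =>
      intro y hy
      rcases boundIn_mk2.1 hy with h | h
      · exact boundIn_mk2.2 (Or.inl (ih y h))
      · exact boundIn_mk2.2 (Or.inr h)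
  | appR P _ ih =>
      intro y hy
      rcases boundIn_mk2.1 hy with h | h
      · exact boundIn_mk2.2 (Or.inl h)
      · exact boundIn_mk2.2 (Or.inr (ih y h))
  | labs z _ ih =>
      intro y hy
      rcases boundIn_mk1.1 hy with h | h
      · exact boundIn_mk1.2 (Or.inl h)
      · exact boundIn_mk1.2 (Or.inr (ih y h))
  | iabs z _ ih =>
      intro y hy
      rcases boundIn_mk1.1 hy with h | h
      · exact boundIn_mk1.2 (Or.inl h)
      · exact boundIn_mk1.2 (Or.inr (ih y h))
  | cabs z _ ih =>
      intro y hy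
      rcases boundIn_mk1.1 hy with h | h
      · exact boundIn_mk1.2 (Or.inl h)
      · exact boundIn_mk1.2 (Or.inr (ih y h))
  | ibox _ ih =>
      intro y hy
      rcases boundIn_mk1.1 hy with h | h
      · exact boundIn_mk1.2 (Or.inl h)
      · exact boundIn_mk1.2 (Or.inr (ih y h))
  | cbox _ ih =>
      intro y hy
      rcases boundIn_mk1.1 hy with h | h
      · exact boundIn_mk1.2 (Or.inl h)
      · exact boundIn_mk1.2 (Or.inr (ih y h))

lemma red_free {s : List Bool} {A A' : T} (h : Red s A A') :
    ∀ y, Free y A' → Free y A := by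
  induction h with
  | base hb =>
      intro y hy
      cases hb with
      | lin z B Q =>
          rcases free_subst hy with ⟨hyz, h⟩ | h
          · exact free_mk2.2 (Or.inl ((free_mk1 (by simp)).2 ⟨by simp [bindsX, Ne.symm hyz], h⟩))
          · exact free_mk2.2 (Or.inr h)
      | ind z B Q =>
          rcases free_subst hy with ⟨hyz, h⟩ | h
          · exact free_mk2.2 (Or.inl ((free_mk1 (by simp)).2 ⟨by simp [bindsX, Ne.symm hyz], h⟩))
          · exact free_mk2.2 (Or.inr ((free_mk1 (by simp)).2 ⟨by simp [bindsX], h⟩))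
      | coi z B Q =>
          rcases free_subst hy with ⟨hyz, h⟩ | h
          · exact free_mk2.2 (Or.inl ((free_mk1 (by simp)).2 ⟨by simp [bindsX, Ne.symm hyz], h⟩))
          · exact free_mk2.2 (Or.inr ((free_mk1 (by simp)).2 ⟨by simp [bindsX], h⟩))
  | appL P _ ih =>
      intro y hy
      rcases free_mk2.1 hy with h | h
      · exact free_mk2.2 (Or.inl (ih y h))
      · exact free_mk2.2 (Or.inr h)
  | appR P _ ih =>
      intro y hy
      rcases free_mk2.1 hy with h | h
      · exact free_mk2.2 (Or.inl h)
      · exact free_mk2.2 (Or.inr (ih y h))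
  | labs z _ ih =>
      intro y hy
      obtain ⟨h1, h2⟩ := (free_mk1 (by simp)).1 hy
      exact (free_mk1 (by simp)).2 ⟨h1, ih y h2⟩
  | iabs z _ ih =>
      intro y hy
      obtain ⟨h1, h2⟩ := (free_mk1 (by simp)).1 hy
      exact (free_mk1 (by simp)).2 ⟨h1, ih y h2⟩
  | cabs z _ ih =>
      intro y hy
      obtain ⟨h1, h2⟩ := (free_mk1 (by simp)).1 hy
      exact (free_mk1 (by simp)).2 ⟨h1, ih y h2⟩
  | ibox _ ih =>
      intro y hy
      obtain ⟨h1, h2⟩ := (free_mk1 (by simp)).1 hy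
      exact (free_mk1 (by simp)).2 ⟨h1, ih y h2⟩
  | cbox _ ih =>
      intro y hy
      obtain ⟨h1, h2⟩ := (free_mk1 (by simp)).1 hy
      exact (free_mk1 (by simp)).2 ⟨h1, ih y h2⟩

lemma red_subst {x : ℕ} {C : T} {s : List Bool} {A A' : T}
    (h : Red s A A') (hb : ∀ y, BoundIn y A → ¬ Free y C ∧ y ≠ x) :
    Red s (subst x C A) (subst x C A') := by
  induction h with
  | @base A₀ A₀' hbasic =>
      cases hbasic with
      | lin z B Q =>
          obtain ⟨hfzC, hzx⟩ := hb z redex_bound_lin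
          have hnbB : ∀ p, bindsX x (B p) = false := by
            intro p
            by_contra hc
            exact (hb x ⟨0 :: 0 :: p, by simpa using hc⟩).2 rfl
          rw [subst_mk2, subst_mk1 (by simp) (by simp [bindsX, hzx]),
            subst_comp hzx hfzC hnbB]
          exact Red.base (Basic.lin z _ _)
      | ind z B Q =>
          have hbz : BoundIn z (mk2 (mk1 (Shape.iabs z) B) (mk1 Shape.ibox Q)) :=
            ⟨[0], by simp [bindsX]⟩
          obtain ⟨hfzC, hzx⟩ := hb z hbz
          have hnbB : ∀ p, bindsX x (B p) = false := by
            intro p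
            by_contra hc
            exact (hb x ⟨0 :: 0 :: p, by simpa using hc⟩).2 rfl
          rw [subst_mk2, subst_mk1 (by simp) (by simp [bindsX, hzx]),
            subst_mk1 (s := Shape.ibox) (by simp) (by simp [bindsX]),
            subst_comp hzx hfzC hnbB]
          exact Red.base (Basic.ind z _ _)
      | coi z B Q =>
          have hbz : BoundIn z (mk2 (mk1 (Shape.cabs z) B) (mk1 Shape.cbox Q)) :=
            ⟨[0], by simp [bindsX]⟩
          obtain ⟨hfzC, hzx⟩ := hb z hbz
          have hnbB : ∀ p, bindsX x (B p) = false := by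
            intro p
            by_contra hc
            exact (hb x ⟨0 :: 0 :: p, by simpa using hc⟩).2 rfl
          rw [subst_mk2, subst_mk1 (by simp) (by simp [bindsX, hzx]),
            subst_mk1 (s := Shape.cbox) (by simp) (by simp [bindsX]),
            subst_comp hzx hfzC hnbB]
          exact Red.base (Basic.coi z _ _)
  | appL P _ ih =>
      rw [subst_mk2, subst_mk2]
      exact Red.appL _ (ih (fun y hy => hb y (boundIn_mk2.2 (Or.inl hy))))
  | appR P _ ih =>
      rw [subst_mk2, subst_mk2]
      exact Red.appR _ (ih (fun y hy => hb y (boundIn_mk2.2 (Or.inr hy))))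
  | @labs s M N z hred ih =>
      by_cases hzx : z = x
      · subst hzx
        rw [subst_mk1_bind (by simp) (by simp [bindsX]),
          subst_mk1_bind (by simp) (by simp [bindsX])]
        exact Red.labs z hred
      · rw [subst_mk1 (by simp) (by simp [bindsX, hzx]),
          subst_mk1 (by simp) (by simp [bindsX, hzx])]
        exact Red.labs z (ih (fun y hy => hb y (boundIn_mk1.2 (Or.inr hy))))
  | @iabs s M N z hred ih =>
      by_cases hzx : z = x
      · subst hzx
        rw [subst_mk1_bind (by simp) (by simp [bindsX]),
          subst_mk1_bind (by simp) (by simp [bindsX])]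
        exact Red.iabs z hred
      · rw [subst_mk1 (by simp) (by simp [bindsX, hzx]),
          subst_mk1 (by simp) (by simp [bindsX, hzx])]
        exact Red.iabs z (ih (fun y hy => hb y (boundIn_mk1.2 (Or.inr hy))))
  | @cabs s M N z hred ih =>
      by_cases hzx : z = x
      · subst hzx
        rw [subst_mk1_bind (by simp) (by simp [bindsX]),
          subst_mk1_bind (by simp) (by simp [bindsX])]
        exact Red.cabs z hred
      · rw [subst_mk1 (by simp) (by simp [bindsX, hzx]),
          subst_mk1 (by simp) (by simp [bindsX, hzx])]
        exact Red.cabs z (ih (fun y hy => hb y (boundIn_mk1.2 (Or.inr hy))))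
  | ibox _ ih =>
      rw [subst_mk1 (by simp) (by simp [bindsX]), subst_mk1 (by simp) (by simp [bindsX])]
      exact Red.ibox (ih (fun y hy => hb y (boundIn_mk1.2 (Or.inr hy))))
  | cbox _ ih =>
      rw [subst_mk1 (by simp) (by simp [bindsX]), subst_mk1 (by simp) (by simp [bindsX])]
      exact Red.cbox (ih (fun y hy => hb y (boundIn_mk1.2 (Or.inr hy))))

lemma star_subst {x : ℕ} {C : T} {A K : T}
    (h : Star A K) (hb : ∀ y, BoundIn y A → ¬ Free y C ∧ y ≠ x) :
    Star (subst x C A) (subst x C K) := by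
  induction h using Relation.ReflTransGen.head_induction_on with
  | refl => exact Relation.ReflTransGen.refl
  | head hstep _ ih =>
      obtain ⟨s, hs⟩ := hstep
      refine Relation.ReflTransGen.head ⟨s, red_subst hs hb⟩ ?_
      exact ih (fun y hy => hb y (red_boundIn hs y hy))

lemma star_boundIn {A K : T} (h : Star A K) : ∀ y, BoundIn y K → BoundIn y A := by
  induction h using Relation.ReflTransGen.head_induction_on with
  | refl => exact fun y h => h
  | head hstep _ ih =>
      obtain ⟨s, hs⟩ := hstep
      exact fun y hy => red_boundIn hs y (ih y hy)

lemma star_free {A K : T} (h : Star A K) : ∀ y, Free y K → Free y A := by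
  induction h using Relation.ReflTransGen.head_induction_on with
  | refl => exact fun y h => h
  | head hstep _ ih =>
      obtain ⟨s, hs⟩ := hstep
      exact fun y hy => red_free hs y (ih y hy)

/-! ### Star congruences -/

lemma star_appL {A B : T} (P : T) (h : Star A B) : Star (mk2 A P) (mk2 B P) :=
  Relation.ReflTransGen.lift (fun X => mk2 X P)
    (fun _ _ ⟨s, hs⟩ => ⟨s, Red.appL P hs⟩) _ _ h

lemma star_appR {A B : T} (P : T) (h : Star A B) : Star (mk2 P A) (mk2 P B) :=
  Relation.ReflTransGen.lift (fun X => mk2 P X)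
    (fun _ _ ⟨s, hs⟩ => ⟨s, Red.appR P hs⟩) _ _ h

lemma star_labs {A B : T} (z : ℕ) (h : Star A B) :
    Star (mk1 (Shape.labs z) A) (mk1 (Shape.labs z) B) :=
  Relation.ReflTransGen.lift (fun X => mk1 (Shape.labs z) X)
    (fun _ _ ⟨s, hs⟩ => ⟨s, Red.labs z hs⟩) _ _ h

lemma star_iabs {A B : T} (z : ℕ) (h : Star A B) :
    Star (mk1 (Shape.iabs z) A) (mk1 (Shape.iabs z) B) :=
  Relation.ReflTransGen.lift (fun X => mk1 (Shape.iabs z) X)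
    (fun _ _ ⟨s, hs⟩ => ⟨s, Red.iabs z hs⟩) _ _ h

lemma star_cabs {A B : T} (z : ℕ) (h : Star A B) :
    Star (mk1 (Shape.cabs z) A) (mk1 (Shape.cabs z) B) :=
  Relation.ReflTransGen.lift (fun X => mk1 (Shape.cabs z) X)
    (fun _ _ ⟨s, hs⟩ => ⟨s, Red.cabs z hs⟩) _ _ h

lemma star_ibox {A B : T} (h : Star A B) :
    Star (mk1 Shape.ibox A) (mk1 Shape.ibox B) :=
  Relation.ReflTransGen.lift (fun X => mk1 Shape.ibox X)
    (fun _ _ ⟨s, hs⟩ => ⟨false :: s, Red.ibox hs⟩) _ _ h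

lemma star_cbox {A B : T} (h : Star A B) :
    Star (mk1 Shape.cbox A) (mk1 Shape.cbox B) :=
  Relation.ReflTransGen.lift (fun X => mk1 Shape.cbox X)
    (fun _ _ ⟨s, hs⟩ => ⟨true :: s, Red.cbox hs⟩) _ _ h
/-! ### Infinitary reduction: infrastructure -/

lemma irind_mono {R R' : Bool → T → T → Prop} (hRR : ∀ b M N, R b M N → R' b M N) :
    ∀ {b M N}, IRInd R b M N → IRInd R' b M N := by
  intro b M N h
  induction h with
  | base h => exact IRInd.base (hRR _ _ _ h)
  | varr z => exact IRInd.varr z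
  | app _ _ ih1 ih2 => exact IRInd.app ih1 ih2
  | labs z _ ih => exact IRInd.labs z ih
  | iabs z _ ih => exact IRInd.iabs z ih
  | cabs z _ ih => exact IRInd.cabs z ih
  | ibox _ ih => exact IRInd.ibox ih
  | cbox _ ih => exact IRInd.cbox ih

lemma irco_mono {S S' : Bool → T → T → Prop} (h : ∀ M N, S false M N → S' false M N) :
    ∀ b M N, IRCo S b M N → IRCo S' b M N := by
  rintro b M N ⟨rfl, K, h1, h2⟩
  exact ⟨rfl, K, h1, h K N h2⟩

lemma irsys_unfold {b : Bool} {M N : T} (h : IRSys b M N) : IRInd (IRCo IRSys) b M N := by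
  obtain ⟨S, hS, hMN⟩ := h
  exact irind_mono (irco_mono (fun M N hs => ⟨S, hS, hs⟩)) (hS _ _ _ hMN)

lemma irsys_fold {b : Bool} {M N : T} (h : IRInd (IRCo IRSys) b M N) : IRSys b M N := by
  refine ⟨fun b M N => IRInd (IRCo IRSys) b M N, ?_, h⟩
  intro b M N hMN
  exact irind_mono (irco_mono (fun M N h' => irsys_unfold h')) hMN

lemma next_app {A B P Q : T} (h1 : Next A B) (h2 : Next P Q) :
    Next (mk2 A P) (mk2 B Q) :=
  irsys_fold (IRInd.app (irsys_unfold h1) (irsys_unfold h2))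

lemma next_mk1 {s : Shape} {A B : T}
    (hs : s = Shape.ibox ∨ ∃ z, s = Shape.labs z ∨ s = Shape.iabs z ∨ s = Shape.cabs z)
    (h : Next A B) : Next (mk1 s A) (mk1 s B) := by
  rcases hs with rfl | ⟨z, rfl | rfl | rfl⟩
  · exact irsys_fold (IRInd.ibox (irsys_unfold h))
  · exact irsys_fold (IRInd.labs z (irsys_unfold h))
  · exact irsys_fold (IRInd.iabs z (irsys_unfold h))
  · exact irsys_fold (IRInd.cabs z (irsys_unfold h))

lemma next_cbox {A B K : T} (h1 : Star A K) (h2 : Next K B) :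
    Next (mk1 Shape.cbox A) (mk1 Shape.cbox B) :=
  irsys_fold (IRInd.cbox (IRInd.base ⟨rfl, K, h1, h2⟩))

lemma irsys_true {M N : T} (h : IRSys true M N) :
    ∃ K, Star M K ∧ IRSys false K N := by
  have h' := irsys_unfold h
  cases h' with
  | base hco => exact ⟨hco.2.choose, hco.2.choose_spec⟩

/-! ### Inversion lemmas for ⤳ -/

lemma next_inv_app {M N₁ N₂ : T} (h : Next M (mk2 N₁ N₂)) :
    ∃ M₁ M₂, M = mk2 M₁ M₂ ∧ Next M₁ N₁ ∧ Next M₂ N₂ := by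
  have h' := irsys_unfold h
  generalize hE : mk2 N₁ N₂ = E at h'
  cases h' with
  | base hco => exact absurd hco.1 (by simp)
  | varr z => exact absurd hE.symm (mk0_ne_mk2 (by simp))
  | app h1 h2 =>
      obtain ⟨rfl, rfl⟩ := mk2_inj hE
      exact ⟨_, _, rfl, irsys_fold h1, irsys_fold h2⟩
  | labs z h1 => exact absurd hE.symm (mk1_ne_mk2 (by simp))
  | iabs z h1 => exact absurd hE.symm (mk1_ne_mk2 (by simp))
  | cabs z h1 => exact absurd hE.symm (mk1_ne_mk2 (by simp))
  | ibox h1 => exact absurd hE.symm (mk1_ne_mk2 (by simp))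
  | cbox h1 => exact absurd hE.symm (mk1_ne_mk2 (by simp))

lemma next_inv_mk1 {M N₁ : T} {s : Shape}
    (hs : ∃ z, s = Shape.labs z ∨ s = Shape.iabs z ∨ s = Shape.cabs z ∨
      (s = Shape.ibox ∧ z = 0))
    (h : Next M (mk1 s N₁)) :
    ∃ M₁, M = mk1 s M₁ ∧ Next M₁ N₁ := by
  have h' := irsys_unfold h
  generalize hE : mk1 s N₁ = E at h'
  obtain ⟨z, hz⟩ := hs
  cases h' with
  | base hco => exact absurd hco.1 (by simp)
  | varr w =>
      exfalso
      have := congrFun hE []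
      simp only [mk0_nil, mk1_nil, Option.some.injEq] at this
      rcases hz with rfl | rfl | rfl | ⟨rfl, -⟩ <;> cases this
  | app h1 h2 =>
      exfalso
      have := congrFun hE []
      simp only [mk2_nil, mk1_nil, Option.some.injEq] at this
      rcases hz with rfl | rfl | rfl | ⟨rfl, -⟩ <;> cases this
  | labs w h1 =>
      obtain ⟨he, rfl⟩ := mk1_inj hE
      rcases hz with rfl | rfl | rfl | ⟨rfl, -⟩ <;> first
        | (cases he; exact ⟨_, rfl, irsys_fold h1⟩)
        | cases he
  | iabs w h1 =>
      obtain ⟨he, rfl⟩ := mk1_inj hE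
      rcases hz with rfl | rfl | rfl | ⟨rfl, -⟩ <;> first
        | (cases he; exact ⟨_, rfl, irsys_fold h1⟩)
        | cases he
  | cabs w h1 =>
      obtain ⟨he, rfl⟩ := mk1_inj hE
      rcases hz with rfl | rfl | rfl | ⟨rfl, -⟩ <;> first
        | (cases he; exact ⟨_, rfl, irsys_fold h1⟩)
        | cases he
  | ibox h1 =>
      obtain ⟨he, rfl⟩ := mk1_inj hE
      rcases hz with rfl | rfl | rfl | ⟨rfl, -⟩ <;> first
        | (cases he; exact ⟨_, rfl, irsys_fold h1⟩)
        | cases he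
  | cbox h1 =>
      obtain ⟨he, rfl⟩ := mk1_inj hE
      rcases hz with rfl | rfl | rfl | ⟨rfl, -⟩ <;> cases he

lemma next_inv_cbox {M N₁ : T} (h : Next M (mk1 Shape.cbox N₁)) :
    ∃ M₁ K, M = mk1 Shape.cbox M₁ ∧ Star M₁ K ∧ Next K N₁ := by
  have h' := irsys_unfold h
  generalize hE : mk1 Shape.cbox N₁ = E at h'
  cases h' with
  | base hco => exact absurd hco.1 (by simp)
  | varr w =>
      exfalso
      have := congrFun hE []
      simp at this
  | app h1 h2 =>
      exfalso
      have := congrFun hE []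
      simp at this
  | labs w h1 => obtain ⟨he, rfl⟩ := mk1_inj hE; cases he
  | iabs w h1 => obtain ⟨he, rfl⟩ := mk1_inj hE; cases he
  | cabs w h1 => obtain ⟨he, rfl⟩ := mk1_inj hE; cases he
  | ibox h1 => obtain ⟨he, rfl⟩ := mk1_inj hE; cases he
  | cbox h1 =>
      obtain ⟨he, rfl⟩ := mk1_inj hE
      obtain ⟨K, hK1, hK2⟩ := irsys_true (irsys_fold h1)
      exact ⟨_, K, rfl, hK1, hK2⟩
/-! ### Advancing the substituted argument inside coinductive boxes -/

lemma adv {x : ℕ} {C C' : T} (hCC' : Star C C') :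
    ∀ {b : Bool} {K B : T}, IRInd (IRCo IRSys) b K B → b = false →
      Star (subst x C K) (msubst x C' C K) := by
  intro b K B h
  induction h with
  | base hco => intro hb; rw [hco.1] at hb; cases hb
  | varr z =>
      intro _
      by_cases hz : z = x
      · subst hz
        rw [subst_root_var (by simp) C, msubst_root_var (by simp) C' C]
        exact hCC'
      · rw [subst_mk0_ne hz, msubst_mk0_ne hz]
        exact Relation.ReflTransGen.refl
  | app h1 h2 ih1 ih2 =>
      intro _
      rw [subst_mk2, msubst_mk2]
      exact Relation.ReflTransGen.trans
        (star_appL _ (ih1 rfl)) (star_appR _ (ih2 rfl))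
  | @labs M N z h1 ih =>
      intro _
      by_cases hz : z = x
      · subst hz
        rw [subst_mk1_bind (by simp) (by simp [bindsX]),
          msubst_mk1_bind (by simp) (by simp [bindsX])]
        exact Relation.ReflTransGen.refl
      · rw [subst_mk1 (by simp) (by simp [bindsX, hz]),
          msubst_mk1 (by simp) (by simp [bindsX, hz]) (by simp)]
        exact star_labs z (ih rfl)
  | @iabs M N z h1 ih =>
      intro _
      by_cases hz : z = x
      · subst hz
        rw [subst_mk1_bind (by simp) (by simp [bindsX]),
          msubst_mk1_bind (by simp) (by simp [bindsX])]
        exact Relation.ReflTransGen.refl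
      · rw [subst_mk1 (by simp) (by simp [bindsX, hz]),
          msubst_mk1 (by simp) (by simp [bindsX, hz]) (by simp)]
        exact star_iabs z (ih rfl)
  | @cabs M N z h1 ih =>
      intro _
      by_cases hz : z = x
      · subst hz
        rw [subst_mk1_bind (by simp) (by simp [bindsX]),
          msubst_mk1_bind (by simp) (by simp [bindsX])]
        exact Relation.ReflTransGen.refl
      · rw [subst_mk1 (by simp) (by simp [bindsX, hz]),
          msubst_mk1 (by simp) (by simp [bindsX, hz]) (by simp)]
        exact star_cabs z (ih rfl)
  | ibox h1 ih =>
      intro _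
      rw [subst_mk1 (by simp) (by simp [bindsX]),
        msubst_mk1 (by simp) (by simp [bindsX]) (by simp)]
      exact star_ibox (ih rfl)
  | cbox h1 ih =>
      intro _
      rw [subst_mk1 (by simp) (by simp [bindsX]), msubst_cbox]
      exact Relation.ReflTransGen.refl

/-! ### The condition CONDW -/

lemma condw_child {x : ℕ} {C A : T} (h : CONDW x C A)
    (hroot : bindsX x (A []) = false) (i : ℕ) : CONDW x C (child A i) := by
  intro p y hc hnx hf hb
  have hsub : sub (child A i) (p ++ [0]) = sub A (i :: (p ++ [0])) := by
    funext q; rfl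
  refine h (i :: p) y hc ?_ ?_ ?_
  · intro p₁ j p₂ he
    cases p₁ with
    | nil => exact hroot
    | cons k p₁' =>
        rw [List.cons_append] at he
        injection he with h1 h2
        subst h1
        exact hnx p₁' j p₂ h2
  · rw [show (i :: p) ++ [0] = i :: (p ++ [0]) from rfl, ← hsub]; exact hf
  · rw [show (i :: p) ++ [0] = i :: (p ++ [0]) from rfl, ← hsub]; exact hb

lemma condw_of_boundIn {x : ℕ} {C A : T}
    (h : ∀ y, BoundIn y A → ¬ Free y C ∧ y ≠ x) : CONDW x C A := by
  intro p y _ _ _ hb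
  exact h y (boundIn_sub hb)

lemma condw_cbox_content {x : ℕ} {C A₁ : T} (h : CONDW x C (mk1 Shape.cbox A₁))
    (hfx : Free x A₁) : ∀ y, BoundIn y A₁ → ¬ Free y C ∧ y ≠ x := by
  intro y hb
  refine h [] y rfl ?_ ?_ ?_
  · intro p₁ i p₂ he; exact absurd he (by simp)
  · have : sub (mk1 Shape.cbox A₁) [0] = A₁ := by funext q; rfl
    rw [show ([] : List ℕ) ++ [0] = [0] from rfl, this]; exact hfx
  · have : sub (mk1 Shape.cbox A₁) [0] = A₁ := by funext q; rfl
    rw [show ([] : List ℕ) ++ [0] = [0] from rfl, this]; exact hb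

lemma prefix_of_append_singleton {p p₁ p₂ : List ℕ} {i k : ℕ}
    (he : p ++ [k] = p₁ ++ i :: p₂) : p₁ = p ∨ ∃ j r, p = p₁ ++ j :: r := by
  induction p₁ generalizing p with
  | nil =>
      cases p with
      | nil => exact Or.inl rfl
      | cons j r => exact Or.inr ⟨j, r, rfl⟩
  | cons m p₁' ih =>
      cases p with
      | nil =>
          exfalso
          rw [List.nil_append, List.cons_append] at he
          injection he with h1 h2
          exact absurd h2.symm (by simp)
      | cons j r =>
          rw [List.cons_append, List.cons_append] at he
          injection he with h1 h2
          subst h1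
          rcases ih h2 with rfl | ⟨j', r', rfl⟩
          · exact Or.inl rfl
          · exact Or.inr ⟨j', r', rfl⟩

lemma not_free_condw {x : ℕ} {C A : T} (hnf : ¬ Free x A) : CONDW x C A := by
  intro p y hc hnx hf _
  exfalso
  obtain ⟨q, hq⟩ := hf
  refine hnf ⟨(p ++ [0]) ++ q, freeAt_sub_append ?_ hq⟩
  intro p₁ i p₂ he
  rcases prefix_of_append_singleton he with rfl | ⟨j, r, rfl⟩
  · rw [hc]; simp [bindsX]
  · exact hnx p₁ j r rfl

/-! ### The substitutivity of ⤳ -/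

def NSub (x : ℕ) (C C' D : T) : Bool → T → T → Prop := fun b M N =>
  IRSys b M N ∨ (b = false ∧ ∃ A B, IRSys false A B ∧ CONDW x C A ∧
    M = msubst x C' C A ∧ N = subst x D B)

lemma nsub_main {x : ℕ} {C C' D : T} (hCC' : Star C C') (hC'D : IRSys false C' D)
    {b : Bool} {A B : T} (h : IRInd (IRCo IRSys) b A B) :
    (b = false → CONDW x C A →
      IRInd (IRCo (NSub x C C' D)) false (msubst x C' C A) (subst x D B)) ∧
    (b = true → (Free x A → ∀ y, BoundIn y A → ¬ Free y C ∧ y ≠ x) →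
      IRInd (IRCo (NSub x C C' D)) true (subst x C A) (subst x D B)) := by
  induction h with
  | @base b M N hco =>
      obtain ⟨hb, K, hMK, hKN⟩ := hco
      subst hb
      refine ⟨?_, ?_⟩
      · intro h; exact absurd h (by simp)
      intro _ hcond
      by_cases hfx : Free x M
      · refine IRInd.base ⟨rfl, msubst x C' C K, ?_, Or.inr ⟨rfl, K, N, hKN, ?_, rfl, rfl⟩⟩
        · exact Relation.ReflTransGen.trans
            (star_subst hMK (fun y hy => hcond hfx y hy))
            (adv hCC' (irsys_unfold hKN) rfl)
        · exact condw_of_boundIn (fun y hy => hcond hfx y (star_boundIn hMK y hy))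
      · have hfxK : ¬ Free x K := fun hc => hfx (star_free hMK x hc)
        refine IRInd.base ⟨rfl, msubst x C' C K, ?_,
          Or.inr ⟨rfl, K, N, hKN, not_free_condw hfxK, rfl, rfl⟩⟩
        rw [subst_not_free hfx C, msubst_not_free hfxK C' C]
        exact hMK
  | varr z =>
      refine ⟨fun _ _ => ?_, fun h => by cases h⟩
      by_cases hz : z = x
      · subst hz
        rw [msubst_root_var (by simp) C' C, subst_root_var (by simp) D]
        exact irind_mono (irco_mono (fun M N h' => Or.inl h')) (irsys_unfold hC'D)
      · rw [msubst_mk0_ne hz, subst_mk0_ne hz]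
        exact IRInd.varr z
  | app h1 h2 ih1 ih2 =>
      refine ⟨fun _ hcond => ?_, fun h => by cases h⟩
      rw [msubst_mk2, subst_mk2]
      exact IRInd.app
        (ih1.1 rfl (condw_child hcond (by simp [bindsX]) 0))
        (ih2.1 rfl (condw_child hcond (by simp [bindsX]) 1))
  | @labs M N z h1 ih =>
      refine ⟨fun _ hcond => ?_, fun h => by cases h⟩
      by_cases hz : z = x
      · subst hz
        rw [msubst_mk1_bind (by simp) (by simp [bindsX]),
          subst_mk1_bind (by simp) (by simp [bindsX])]
        exact IRInd.labs z (irind_mono (irco_mono (fun M N h' => Or.inl h')) h1)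
      · rw [msubst_mk1 (by simp) (by simp [bindsX, hz]) (by simp),
          subst_mk1 (by simp) (by simp [bindsX, hz])]
        exact IRInd.labs z (ih.1 rfl (condw_child hcond (by simp [bindsX, hz]) 0))
  | @iabs M N z h1 ih =>
      refine ⟨fun _ hcond => ?_, fun h => by cases h⟩
      by_cases hz : z = x
      · subst hz
        rw [msubst_mk1_bind (by simp) (by simp [bindsX]),
          subst_mk1_bind (by simp) (by simp [bindsX])]
        exact IRInd.iabs z (irind_mono (irco_mono (fun M N h' => Or.inl h')) h1)
      · rw [msubst_mk1 (by simp) (by simp [bindsX, hz]) (by simp),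
          subst_mk1 (by simp) (by simp [bindsX, hz])]
        exact IRInd.iabs z (ih.1 rfl (condw_child hcond (by simp [bindsX, hz]) 0))
  | @cabs M N z h1 ih =>
      refine ⟨fun _ hcond => ?_, fun h => by cases h⟩
      by_cases hz : z = x
      · subst hz
        rw [msubst_mk1_bind (by simp) (by simp [bindsX]),
          subst_mk1_bind (by simp) (by simp [bindsX])]
        exact IRInd.cabs z (irind_mono (irco_mono (fun M N h' => Or.inl h')) h1)
      · rw [msubst_mk1 (by simp) (by simp [bindsX, hz]) (by simp),
          subst_mk1 (by simp) (by simp [bindsX, hz])]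
        exact IRInd.cabs z (ih.1 rfl (condw_child hcond (by simp [bindsX, hz]) 0))
  | ibox h1 ih =>
      refine ⟨fun _ hcond => ?_, fun h => by cases h⟩
      rw [msubst_mk1 (by simp) (by simp [bindsX]) (by simp),
        subst_mk1 (by simp) (by simp [bindsX])]
      exact IRInd.ibox (ih.1 rfl (condw_child hcond (by simp [bindsX]) 0))
  | cbox h1 ih =>
      refine ⟨fun _ hcond => ?_, fun h => by cases h⟩
      rw [msubst_cbox, subst_mk1 (s := Shape.cbox) (by simp) (by simp [bindsX])]
      exact IRInd.cbox (ih.2 rfl (condw_cbox_content hcond))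

lemma next_subst {x : ℕ} {C C' D A B : T} (hCC' : Star C C') (hC'D : Next C' D)
    (hAB : Next A B) (hcond : CONDW x C A) :
    Next (msubst x C' C A) (subst x D B) := by
  refine ⟨NSub x C C' D, ?_, Or.inr ⟨rfl, A, B, hAB, hcond, rfl, rfl⟩⟩
  rintro b M N (h | ⟨rfl, A', B', hAB', hcond', rfl, rfl⟩)
  · exact irind_mono (irco_mono (fun M N h' => Or.inl h')) (irsys_unfold h)
  · exact (nsub_main hCC' hC'D (irsys_unfold hAB')).1 rfl hcond'
/-! ### Well-formation in ℓΛ∞^{4S}: infrastructure -/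

lemma wf4step_mono {R R' : Env4 → T → Prop} (h : ∀ Γ M, R Γ M → R' Γ M) :
    ∀ {Γ M}, WF4Step R Γ M → WF4Step R' Γ M := by
  intro Γ M hw
  induction hw with
  | base hb => exact WF4Step.base (h _ _ hb)
  | vl z h1 h2 => exact WF4Step.vl z h1 h2
  | vd z h1 h2 => exact WF4Step.vd z h1 h2
  | va z h1 h2 => exact WF4Step.va z h1 h2
  | app hsp _ _ ih1 ih2 => exact WF4Step.app hsp ih1 ih2
  | ll h1 _ ih => exact WF4Step.ll h1 ih
  | li1 h1 _ ih => exact WF4Step.li1 h1 ih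
  | li2 h1 _ ih => exact WF4Step.li2 h1 ih
  | lc h1 _ ih => exact WF4Step.lc h1 ih
  | mi h1 _ ih => exact WF4Step.mi h1 ih

lemma wf4_unfold {Γ : Env4} {M : T} (h : WF4 Γ M) : WF4Step (CoStep4 WF4) Γ M := by
  obtain ⟨S, hS, hM⟩ := h
  refine wf4step_mono ?_ (hS _ _ hM)
  rintro Δ N ⟨Γ', N', hmc, rfl, hS'⟩
  exact ⟨Γ', N', hmc, rfl, S, hS, hS'⟩

lemma wf4_fold {Γ : Env4} {M : T} (h : WF4Step (CoStep4 WF4) Γ M) : WF4 Γ M := by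
  refine ⟨fun Δ N => WF4Step (CoStep4 WF4) Δ N, ?_, h⟩
  intro Δ N hΔ
  refine wf4step_mono ?_ hΔ
  rintro Δ' N' ⟨Γ', N'', hmc, rfl, hS'⟩
  exact ⟨Γ', N'', hmc, rfl, wf4_unfold hS'⟩

lemma wf4_app_inv {Γ : Env4} {M N : T} (h : WF4 Γ (mk2 M N)) :
    ∃ Γ₁ Γ₂, Split4 Γ Γ₁ Γ₂ ∧ WF4 Γ₁ M ∧ WF4 Γ₂ N := by
  have h' := wf4_unfold h
  generalize hE : mk2 M N = E at h'
  cases h' with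
  | base hb =>
      obtain ⟨Γ', N', hmc, he, hS⟩ := hb
      rw [he] at hE
      exact absurd hE.symm (mk1_ne_mk2 (by simp))
  | vl z h1 h2 => exact absurd hE.symm (mk0_ne_mk2 (by simp))
  | vd z h1 h2 => exact absurd hE.symm (mk0_ne_mk2 (by simp))
  | va z h1 h2 => exact absurd hE.symm (mk0_ne_mk2 (by simp))
  | app hsp h1 h2 =>
      obtain ⟨rfl, rfl⟩ := mk2_inj hE
      exact ⟨_, _, hsp, wf4_fold h1, wf4_fold h2⟩
  | ll h1 h2 => exact absurd hE.symm (mk1_ne_mk2 (by simp))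
  | li1 h1 h2 => exact absurd hE.symm (mk1_ne_mk2 (by simp))
  | li2 h1 h2 => exact absurd hE.symm (mk1_ne_mk2 (by simp))
  | lc h1 h2 => exact absurd hE.symm (mk1_ne_mk2 (by simp))
  | mi h1 h2 => exact absurd hE.symm (mk1_ne_mk2 (by simp))

lemma wf4_labs_inv {Γ : Env4} {x : ℕ} {M : T} (h : WF4 Γ (mk1 (Shape.labs x) M)) :
    Γ x = none ∧ WF4 (Γ.upd x (some Pat4.lin)) M := by
  have h' := wf4_unfold h
  generalize hE : mk1 (Shape.labs x) M = E at h'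
  cases h' with
  | base hb =>
      obtain ⟨Γ', N', hmc, he, hS⟩ := hb
      rw [he] at hE
      obtain ⟨he2, -⟩ := mk1_inj hE; cases he2
  | vl z h1 h2 => exact absurd hE.symm (mk0_ne_mk1 (by simp))
  | vd z h1 h2 => exact absurd hE.symm (mk0_ne_mk1 (by simp))
  | va z h1 h2 => exact absurd hE.symm (mk0_ne_mk1 (by simp))
  | app hsp h1 h2 => exact absurd hE (mk1_ne_mk2 (by simp))
  | ll h1 h2 =>
      obtain ⟨he2, rfl⟩ := mk1_inj hE
      injection he2 with hz
      subst hz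
      exact ⟨h1, wf4_fold h2⟩
  | li1 h1 h2 => obtain ⟨he2, -⟩ := mk1_inj hE; cases he2
  | li2 h1 h2 => obtain ⟨he2, -⟩ := mk1_inj hE; cases he2
  | lc h1 h2 => obtain ⟨he2, -⟩ := mk1_inj hE; cases he2
  | mi h1 h2 => obtain ⟨he2, -⟩ := mk1_inj hE; cases he2

lemma wf4_iabs_inv {Γ : Env4} {x : ℕ} {M : T} (h : WF4 Γ (mk1 (Shape.iabs x) M)) :
    Γ x = none ∧ (WF4 (Γ.upd x (some Pat4.dm)) M ∨ WF4 (Γ.upd x (some Pat4.im)) M) := by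
  have h' := wf4_unfold h
  generalize hE : mk1 (Shape.iabs x) M = E at h'
  cases h' with
  | base hb =>
      obtain ⟨Γ', N', hmc, he, hS⟩ := hb
      rw [he] at hE
      obtain ⟨he2, -⟩ := mk1_inj hE; cases he2
  | vl z h1 h2 => exact absurd hE.symm (mk0_ne_mk1 (by simp))
  | vd z h1 h2 => exact absurd hE.symm (mk0_ne_mk1 (by simp))
  | va z h1 h2 => exact absurd hE.symm (mk0_ne_mk1 (by simp))
  | app hsp h1 h2 => exact absurd hE (mk1_ne_mk2 (by simp))
  | ll h1 h2 => obtain ⟨he2, -⟩ := mk1_inj hE; cases he2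
  | li1 h1 h2 =>
      obtain ⟨he2, rfl⟩ := mk1_inj hE
      injection he2 with hz
      subst hz
      exact ⟨h1, Or.inl (wf4_fold h2)⟩
  | li2 h1 h2 =>
      obtain ⟨he2, rfl⟩ := mk1_inj hE
      injection he2 with hz
      subst hz
      exact ⟨h1, Or.inr (wf4_fold h2)⟩
  | lc h1 h2 => obtain ⟨he2, -⟩ := mk1_inj hE; cases he2
  | mi h1 h2 => obtain ⟨he2, -⟩ := mk1_inj hE; cases he2

lemma wf4_cabs_inv {Γ : Env4} {x : ℕ} {M : T} (h : WF4 Γ (mk1 (Shape.cabs x) M)) :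
    Γ x = none ∧ WF4 (Γ.upd x (some Pat4.cm)) M := by
  have h' := wf4_unfold h
  generalize hE : mk1 (Shape.cabs x) M = E at h'
  cases h' with
  | base hb =>
      obtain ⟨Γ', N', hmc, he, hS⟩ := hb
      rw [he] at hE
      obtain ⟨he2, -⟩ := mk1_inj hE; cases he2
  | vl z h1 h2 => exact absurd hE.symm (mk0_ne_mk1 (by simp))
  | vd z h1 h2 => exact absurd hE.symm (mk0_ne_mk1 (by simp))
  | va z h1 h2 => exact absurd hE.symm (mk0_ne_mk1 (by simp))
  | app hsp h1 h2 => exact absurd hE (mk1_ne_mk2 (by simp))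
  | ll h1 h2 => obtain ⟨he2, -⟩ := mk1_inj hE; cases he2
  | li1 h1 h2 => obtain ⟨he2, -⟩ := mk1_inj hE; cases he2
  | li2 h1 h2 => obtain ⟨he2, -⟩ := mk1_inj hE; cases he2
  | lc h1 h2 =>
      obtain ⟨he2, rfl⟩ := mk1_inj hE
      injection he2 with hz
      subst hz
      exact ⟨h1, wf4_fold h2⟩
  | mi h1 h2 => obtain ⟨he2, -⟩ := mk1_inj hE; cases he2

lemma wf4_ibox_inv {Γ : Env4} {M : T} (h : WF4 Γ (mk1 Shape.ibox M)) :
    ∃ Γ', MiEnv Γ Γ' ∧ WF4 Γ' M := by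
  have h' := wf4_unfold h
  generalize hE : mk1 Shape.ibox M = E at h'
  cases h' with
  | base hb =>
      obtain ⟨Γ', N', hmc, he, hS⟩ := hb
      rw [he] at hE
      obtain ⟨he2, -⟩ := mk1_inj hE; cases he2
  | vl z h1 h2 => exact absurd hE.symm (mk0_ne_mk1 (by simp))
  | vd z h1 h2 => exact absurd hE.symm (mk0_ne_mk1 (by simp))
  | va z h1 h2 => exact absurd hE.symm (mk0_ne_mk1 (by simp))
  | app hsp h1 h2 => exact absurd hE (mk1_ne_mk2 (by simp))
  | ll h1 h2 => obtain ⟨he2, -⟩ := mk1_inj hE; cases he2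
  | li1 h1 h2 => obtain ⟨he2, -⟩ := mk1_inj hE; cases he2
  | li2 h1 h2 => obtain ⟨he2, -⟩ := mk1_inj hE; cases he2
  | lc h1 h2 => obtain ⟨he2, -⟩ := mk1_inj hE; cases he2
  | mi h1 h2 =>
      obtain ⟨he2, rfl⟩ := mk1_inj hE
      exact ⟨_, h1, wf4_fold h2⟩

lemma wf4_cbox_inv {Γ : Env4} {M : T} (h : WF4 Γ (mk1 Shape.cbox M)) :
    ∃ Γ', McEnv Γ Γ' ∧ WF4 Γ' M := by
  have h' := wf4_unfold h
  generalize hE : mk1 Shape.cbox M = E at h'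
  cases h' with
  | base hb =>
      obtain ⟨Γ', N', hmc, he, hS⟩ := hb
      rw [he] at hE
      obtain ⟨-, rfl⟩ := mk1_inj hE
      exact ⟨Γ', hmc, hS⟩
  | vl z h1 h2 => exact absurd hE.symm (mk0_ne_mk1 (by simp))
  | vd z h1 h2 => exact absurd hE.symm (mk0_ne_mk1 (by simp))
  | va z h1 h2 => exact absurd hE.symm (mk0_ne_mk1 (by simp))
  | app hsp h1 h2 => exact absurd hE (mk1_ne_mk2 (by simp))
  | ll h1 h2 => obtain ⟨he2, -⟩ := mk1_inj hE; cases he2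
  | li1 h1 h2 => obtain ⟨he2, -⟩ := mk1_inj hE; cases he2
  | li2 h1 h2 => obtain ⟨he2, -⟩ := mk1_inj hE; cases he2
  | lc h1 h2 => obtain ⟨he2, -⟩ := mk1_inj hE; cases he2
  | mi h1 h2 => obtain ⟨he2, -⟩ := mk1_inj hE; cases he2

lemma wf4_var_inv {Γ : Env4} {z : ℕ} (h : WF4 Γ (mk0 (Shape.var z))) :
    Γ z = some Pat4.lin ∨ Γ z = some Pat4.dm ∨ Γ z = some Pat4.am := by
  have h' := wf4_unfold h
  generalize hE : mk0 (Shape.var z) = E at h'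
  cases h' with
  | base hb =>
      obtain ⟨Γ', N', hmc, he, hS⟩ := hb
      rw [he] at hE
      exact absurd hE (mk0_ne_mk1 (by simp))
  | vl w h1 h2 =>
      have := mk0_inj hE; injection this with hw; subst hw
      exact Or.inl h1
  | vd w h1 h2 =>
      have := mk0_inj hE; injection this with hw; subst hw
      exact Or.inr (Or.inl h1)
  | va w h1 h2 =>
      have := mk0_inj hE; injection this with hw; subst hw
      exact Or.inr (Or.inr h1)
  | app hsp h1 h2 => exact absurd hE (mk0_ne_mk2 (by simp))
  | ll h1 h2 => exact absurd hE (mk0_ne_mk1 (by simp))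
  | li1 h1 h2 => exact absurd hE (mk0_ne_mk1 (by simp))
  | li2 h1 h2 => exact absurd hE (mk0_ne_mk1 (by simp))
  | lc h1 h2 => exact absurd hE (mk0_ne_mk1 (by simp))
  | mi h1 h2 => exact absurd hE (mk0_ne_mk1 (by simp))

/-! ### Environment helpers -/

lemma upd_same (Γ : Env4) (z : ℕ) (P : Option Pat4) : Γ.upd z P z = P := by
  simp [Env4.upd]

lemma upd_ne (Γ : Env4) {z y : ℕ} (h : y ≠ z) (P : Option Pat4) : Γ.upd z P y = Γ y := by
  simp [Env4.upd, h]

lemma split4_shared {Γ Γ₁ Γ₂ : Env4} {y : ℕ} (hs : Split4 Γ Γ₁ Γ₂)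
    (h : Shared4 (Γ y)) : Γ₁ y = Γ y ∧ Γ₂ y = Γ y := by
  rcases hs y with ⟨-, h1, h2⟩ | ⟨h0, h1, h2⟩ | ⟨h0, -⟩
  · exact ⟨h1, h2⟩
  · rw [h0] at h; rcases h with h | h | h <;> cases h
  · rcases h0 with h0 | h0 <;> rw [h0] at h <;>
      rcases h with h | h | h <;> simp at h

lemma split4_rev {Γ Γ₁ Γ₂ : Env4} {y : ℕ} (hs : Split4 Γ Γ₁ Γ₂) :
    (Γ₁ y ≠ none → Γ y ≠ none) ∧ (Γ₂ y ≠ none → Γ y ≠ none) := by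
  rcases hs y with ⟨-, h1, h2⟩ | ⟨h0, h1, h2⟩ | ⟨h0, ⟨h1, h2⟩ | ⟨h1, h2⟩⟩ <;>
    constructor <;> intro hne <;> simp_all

lemma split4_lin_im {Γ Γ₁ Γ₂ : Env4} {y : ℕ} (hs : Split4 Γ Γ₁ Γ₂)
    (h : Γ y = some Pat4.lin ∨ Γ y = some Pat4.im) :
    (Γ₁ y = Γ y ∧ Γ₂ y = none) ∨ (Γ₂ y = Γ y ∧ Γ₁ y = none) := by
  rcases hs y with ⟨hsh, -, -⟩ | ⟨h0, -, -⟩ | ⟨-, hc⟩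
  · rcases h with h | h <;> rw [h] at hsh <;> rcases hsh with h' | h' | h' <;> simp at h'
  · rcases h with h | h <;> rw [h0] at h <;> cases h
  · exact hc

lemma mienv_at {Γ Γ' : Env4} (h : MiEnv Γ Γ') (y : ℕ) :
    (Γ y = some Pat4.im ∧ Γ' y = some Pat4.lin) ∨
    (Γ y = some Pat4.cm ∧ Γ' y = some Pat4.cm) ∨
    (Γ y = some Pat4.am ∧ Γ' y = some Pat4.am) ∨
    (Γ y = some Pat4.dm ∧ Γ' y = none) ∨
    (Γ y = none ∧ Γ' y = none) := h y

lemma mcenv_at {Γ Γ' : Env4} (h : McEnv Γ Γ') (y : ℕ) :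
    (Γ y = some Pat4.cm ∧ Γ' y = some Pat4.am) ∨
    (Γ y = some Pat4.am ∧ Γ' y = some Pat4.am) ∨
    (Γ y = some Pat4.dm ∧ Γ' y = none) ∨
    (Γ y = none ∧ Γ' y = none) := h y

lemma mienv_cm_am {Γ Γ' : Env4} {y : ℕ} (h : MiEnv Γ Γ')
    (hy : Γ y = some Pat4.cm ∨ Γ y = some Pat4.am) :
    Γ' y = some Pat4.cm ∨ Γ' y = some Pat4.am := by
  rcases mienv_at h y with ⟨h1, h2⟩ | ⟨h1, h2⟩ | ⟨h1, h2⟩ | ⟨h1, h2⟩ | ⟨h1, h2⟩ <;>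
    rcases hy with hy | hy <;> simp_all

lemma mcenv_cm_am {Γ Γ' : Env4} {y : ℕ} (h : McEnv Γ Γ')
    (hy : Γ y = some Pat4.cm ∨ Γ y = some Pat4.am) : Γ' y = some Pat4.am := by
  rcases mcenv_at h y with ⟨h1, h2⟩ | ⟨h1, h2⟩ | ⟨h1, h2⟩ | ⟨h1, h2⟩ <;>
    rcases hy with hy | hy <;> simp_all

lemma mienv_rev {Γ Γ' : Env4} {y : ℕ} (h : MiEnv Γ Γ') (hy : Γ' y ≠ none) :
    Γ y ≠ none := by
  rcases mienv_at h y with ⟨h1, h2⟩ | ⟨h1, h2⟩ | ⟨h1, h2⟩ | ⟨h1, h2⟩ | ⟨h1, h2⟩ <;> simp_all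

lemma mcenv_rev {Γ Γ' : Env4} {y : ℕ} (h : McEnv Γ Γ') (hy : Γ' y ≠ none) :
    Γ y ≠ none := by
  rcases mcenv_at h y with ⟨h1, h2⟩ | ⟨h1, h2⟩ | ⟨h1, h2⟩ | ⟨h1, h2⟩ <;> simp_all

lemma mcenv_range {Γ Γ' : Env4} (h : McEnv Γ Γ') (y : ℕ) :
    Γ' y = some Pat4.am ∨ Γ' y = none := by
  rcases mcenv_at h y with ⟨h1, h2⟩ | ⟨h1, h2⟩ | ⟨h1, h2⟩ | ⟨h1, h2⟩ <;> simp_all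

lemma mcenv_back_am {Γ Γ' : Env4} {y : ℕ} (h : McEnv Γ Γ') (hy : Γ' y = some Pat4.am) :
    Γ y = some Pat4.cm ∨ Γ y = some Pat4.am := by
  rcases mcenv_at h y with ⟨h1, h2⟩ | ⟨h1, h2⟩ | ⟨h1, h2⟩ | ⟨h1, h2⟩ <;> simp_all
/-! ### Pattern lemmas for well-formed terms -/

@[simp] lemma mk0_cons (s : Shape) (i : ℕ) (q : List ℕ) : mk0 s (i :: q) = none := by
  simp [mk0]

@[simp] lemma mk1_succ (s : Shape) (M : T) (i : ℕ) (q : List ℕ) :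
    mk1 s M ((i+1) :: q) = none := rfl

@[simp] lemma mk2_succ (M N : T) (i : ℕ) (q : List ℕ) :
    mk2 M N ((i+2) :: q) = none := rfl

lemma child_mk0_bot (s : Shape) (i : ℕ) : child (mk0 s) i = bot := by
  funext r; simp [child, mk0, bot]

lemma child_mk1_bot (s : Shape) (M : T) (i : ℕ) : child (mk1 s M) (i+1) = bot := by
  funext r; rfl

lemma child_mk2_bot (M N : T) (i : ℕ) : child (mk2 M N) (i+2) = bot := by
  funext r; rfl

lemma shared4_of_cm_am {o : Option Pat4} (h : o = some Pat4.cm ∨ o = some Pat4.am) :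
    Shared4 o := by
  rcases h with h | h <;> rw [h] <;> simp [Shared4]

/-- (W1) Variables marked `cm`/`am` are never bound in a well-formed term. -/
lemma wf4_no_bind {y : ℕ} : ∀ (p : List ℕ) {Γ : Env4} {A : T}, WF4 Γ A →
    (Γ y = some Pat4.cm ∨ Γ y = some Pat4.am) → bindsX y (A p) = false := by
  intro p
  induction p with
  | nil =>
      intro Γ A h hy
      have h' := wf4_unfold h
      cases h' with
      | base hb => obtain ⟨Γ', N', hmc, rfl, hS⟩ := hb; simp [bindsX]
      | vl z h1 h2 => simp [bindsX]
      | vd z h1 h2 => simp [bindsX]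
      | va z h1 h2 => simp [bindsX]
      | app hsp h1 h2 => simp [bindsX]
      | @ll Γ z M h1 h2 =>
          have hzy : z ≠ y := fun he => by subst he; rcases hy with hy | hy <;> simp_all
          simpa [bindsX] using hzy
      | @li1 Γ z M h1 h2 =>
          have hzy : z ≠ y := fun he => by subst he; rcases hy with hy | hy <;> simp_all
          simpa [bindsX] using hzy
      | @li2 Γ z M h1 h2 =>
          have hzy : z ≠ y := fun he => by subst he; rcases hy with hy | hy <;> simp_all
          simpa [bindsX] using hzy
      | @lc Γ z M h1 h2 =>
          have hzy : z ≠ y := fun he => by subst he; rcases hy with hy | hy <;> simp_all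
          simpa [bindsX] using hzy
      | mi h1 h2 => simp [bindsX]
  | cons i q ih =>
      intro Γ A h hy
      have h' := wf4_unfold h
      cases h' with
      | base hb =>
          obtain ⟨Γ', N', hmc, rfl, hS⟩ := hb
          cases i with
          | zero => exact ih hS (Or.inr (mcenv_cm_am hmc hy))
          | succ n => simp [bindsX]
      | vl z h1 h2 => simp [bindsX]
      | vd z h1 h2 => simp [bindsX]
      | va z h1 h2 => simp [bindsX]
      | app hsp h1 h2 =>
          obtain ⟨he1, he2⟩ := split4_shared hsp (shared4_of_cm_am hy)
          cases i with
          | zero => exact ih (wf4_fold h1) (by rw [he1]; exact hy)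
          | succ n =>
              cases n with
              | zero => exact ih (wf4_fold h2) (by rw [he2]; exact hy)
              | succ m => simp [bindsX]
      | @ll Γ z M h1 h2 =>
          have hzy : z ≠ y := fun he => by subst he; rcases hy with hy | hy <;> simp_all
          cases i with
          | zero => exact ih (wf4_fold h2) (by rw [upd_ne Γ (Ne.symm hzy)]; exact hy)
          | succ n => simp [bindsX]
      | @li1 Γ z M h1 h2 =>
          have hzy : z ≠ y := fun he => by subst he; rcases hy with hy | hy <;> simp_all
          cases i with
          | zero => exact ih (wf4_fold h2) (by rw [upd_ne Γ (Ne.symm hzy)]; exact hy)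
          | succ n => simp [bindsX]
      | @li2 Γ z M h1 h2 =>
          have hzy : z ≠ y := fun he => by subst he; rcases hy with hy | hy <;> simp_all
          cases i with
          | zero => exact ih (wf4_fold h2) (by rw [upd_ne Γ (Ne.symm hzy)]; exact hy)
          | succ n => simp [bindsX]
      | @lc Γ z M h1 h2 =>
          have hzy : z ≠ y := fun he => by subst he; rcases hy with hy | hy <;> simp_all
          cases i with
          | zero => exact ih (wf4_fold h2) (by rw [upd_ne Γ (Ne.symm hzy)]; exact hy)
          | succ n => simp [bindsX]
      | mi h1 h2 =>
          cases i with
          | zero => exact ih (wf4_fold h2) (mienv_cm_am h1 hy)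
          | succ n => simp [bindsX]

/-- (W2) Free variables of a well-formed term occur in the environment. -/
lemma wf4_free_env {y : ℕ} : ∀ (p : List ℕ) {Γ : Env4} {A : T}, WF4 Γ A →
    FreeAt y A p → Γ y ≠ none := by
  intro p
  induction p with
  | nil =>
      intro Γ A h hf
      rw [freeAt_nil] at hf
      have h' := wf4_unfold h
      cases h' with
      | base hb => obtain ⟨Γ', N', hmc, rfl, hS⟩ := hb; simp at hf
      | vl z h1 h2 =>
          simp only [mk0_nil, Option.some.injEq, Shape.var.injEq] at hf
          subst hf; simp [h1]
      | vd z h1 h2 =>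
          simp only [mk0_nil, Option.some.injEq, Shape.var.injEq] at hf
          subst hf; simp [h1]
      | va z h1 h2 =>
          simp only [mk0_nil, Option.some.injEq, Shape.var.injEq] at hf
          subst hf; simp [h1]
      | app hsp h1 h2 => simp at hf
      | ll h1 h2 => simp at hf
      | li1 h1 h2 => simp at hf
      | li2 h1 h2 => simp at hf
      | lc h1 h2 => simp at hf
      | mi h1 h2 => simp at hf
  | cons i q ih =>
      intro Γ A h hf
      rw [freeAt_cons] at hf
      obtain ⟨hb0, hfc⟩ := hf
      have h' := wf4_unfold h
      cases h' with
      | base hb =>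
          obtain ⟨Γ', N', hmc, rfl, hS⟩ := hb
          cases i with
          | zero => exact mcenv_rev hmc (ih hS hfc)
          | succ n => rw [child_mk1_bot] at hfc; exact absurd hfc freeAt_bot
      | vl z h1 h2 => rw [child_mk0_bot] at hfc; exact absurd hfc freeAt_bot
      | vd z h1 h2 => rw [child_mk0_bot] at hfc; exact absurd hfc freeAt_bot
      | va z h1 h2 => rw [child_mk0_bot] at hfc; exact absurd hfc freeAt_bot
      | app hsp h1 h2 =>
          cases i with
          | zero => exact (split4_rev hsp).1 (ih (wf4_fold h1) hfc)
          | succ n =>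
              cases n with
              | zero => exact (split4_rev hsp).2 (ih (wf4_fold h2) hfc)
              | succ m => rw [child_mk2_bot] at hfc; exact absurd hfc freeAt_bot
      | @ll Γ z M h1 h2 =>
          have hzy : z ≠ y := by simpa [bindsX] using hb0
          cases i with
          | zero =>
              have := ih (wf4_fold h2) hfc
              rwa [upd_ne Γ (Ne.symm hzy)] at this
          | succ n => rw [child_mk1_bot] at hfc; exact absurd hfc freeAt_bot
      | @li1 Γ z M h1 h2 =>
          have hzy : z ≠ y := by simpa [bindsX] using hb0
          cases i with
          | zero =>
              have := ih (wf4_fold h2) hfc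
              rwa [upd_ne Γ (Ne.symm hzy)] at this
          | succ n => rw [child_mk1_bot] at hfc; exact absurd hfc freeAt_bot
      | @li2 Γ z M h1 h2 =>
          have hzy : z ≠ y := by simpa [bindsX] using hb0
          cases i with
          | zero =>
              have := ih (wf4_fold h2) hfc
              rwa [upd_ne Γ (Ne.symm hzy)] at this
          | succ n => rw [child_mk1_bot] at hfc; exact absurd hfc freeAt_bot
      | @lc Γ z M h1 h2 =>
          have hzy : z ≠ y := by simpa [bindsX] using hb0
          cases i with
          | zero =>
              have := ih (wf4_fold h2) hfc
              rwa [upd_ne Γ (Ne.symm hzy)] at this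
          | succ n => rw [child_mk1_bot] at hfc; exact absurd hfc freeAt_bot
      | mi h1 h2 =>
          cases i with
          | zero => exact mienv_rev h1 (ih (wf4_fold h2) hfc)
          | succ n => rw [child_mk1_bot] at hfc; exact absurd hfc freeAt_bot
/-- (SUBT) The content of any coinductive box in a well-formed term is
well-formed in an `am`/`none` environment. -/
lemma wf4_cbox_sub : ∀ (p : List ℕ) {Γ : Env4} {A : T}, WF4 Γ A →
    A p = some Shape.cbox →
    ∃ Θ, (∀ y, Θ y = some Pat4.am ∨ Θ y = none) ∧ WF4 Θ (sub A (p ++ [0])) := by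
  intro p
  induction p with
  | nil =>
      intro Γ A h hc
      have h' := wf4_unfold h
      cases h' with
      | base hb =>
          obtain ⟨Γ', N', hmc, rfl, hS⟩ := hb
          refine ⟨Γ', mcenv_range hmc, ?_⟩
          have : sub (mk1 Shape.cbox N') ([] ++ [0]) = N' := by funext r; rfl
          rw [this]; exact hS
      | vl z h1 h2 => simp at hc
      | vd z h1 h2 => simp at hc
      | va z h1 h2 => simp at hc
      | app hsp h1 h2 => simp at hc
      | ll h1 h2 => simp at hc
      | li1 h1 h2 => simp at hc
      | li2 h1 h2 => simp at hc
      | lc h1 h2 => simp at hc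
      | mi h1 h2 => simp at hc
  | cons i q ih =>
      intro Γ A h hc
      have h' := wf4_unfold h
      cases h' with
      | base hb =>
          obtain ⟨Γ', N', hmc, rfl, hS⟩ := hb
          cases i with
          | zero =>
              obtain ⟨Θ, hr, hw⟩ := ih hS hc
              refine ⟨Θ, hr, ?_⟩
              have : sub (mk1 Shape.cbox N') ((0 :: q) ++ [0]) = sub N' (q ++ [0]) := by
                funext r; rfl
              rw [this]; exact hw
          | succ n => simp at hc
      | vl z h1 h2 => simp at hc
      | vd z h1 h2 => simp at hc
      | va z h1 h2 => simp at hc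
      | app hsp h1 h2 =>
          cases i with
          | zero =>
              obtain ⟨Θ, hr, hw⟩ := ih (wf4_fold h1) hc
              exact ⟨Θ, hr, hw⟩
          | succ n =>
              cases n with
              | zero =>
                  obtain ⟨Θ, hr, hw⟩ := ih (wf4_fold h2) hc
                  exact ⟨Θ, hr, hw⟩
              | succ m => simp at hc
      | ll h1 h2 =>
          cases i with
          | zero =>
              obtain ⟨Θ, hr, hw⟩ := ih (wf4_fold h2) hc
              exact ⟨Θ, hr, hw⟩
          | succ n => simp at hc
      | li1 h1 h2 =>
          cases i with
          | zero =>
              obtain ⟨Θ, hr, hw⟩ := ih (wf4_fold h2) hc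
              exact ⟨Θ, hr, hw⟩
          | succ n => simp at hc
      | li2 h1 h2 =>
          cases i with
          | zero =>
              obtain ⟨Θ, hr, hw⟩ := ih (wf4_fold h2) hc
              exact ⟨Θ, hr, hw⟩
          | succ n => simp at hc
      | lc h1 h2 =>
          cases i with
          | zero =>
              obtain ⟨Θ, hr, hw⟩ := ih (wf4_fold h2) hc
              exact ⟨Θ, hr, hw⟩
          | succ n => simp at hc
      | mi h1 h2 =>
          cases i with
          | zero =>
              obtain ⟨Θ, hr, hw⟩ := ih (wf4_fold h2) hc
              exact ⟨Θ, hr, hw⟩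
          | succ n => simp at hc

/-- (NOLID) A variable marked `lin`/`dm`/`im` cannot occur free under a
coinductive box. -/
lemma wf4_lid_nocross {x : ℕ} : ∀ (p : List ℕ) {Γ : Env4} {A : T}, WF4 Γ A →
    FreeAt x A p →
    (Γ x = some Pat4.lin ∨ Γ x = some Pat4.dm ∨ Γ x = some Pat4.im) →
    ¬ CrossC A p := by
  intro p
  induction p with
  | nil =>
      intro Γ A h hf hx
      rintro ⟨p₁, i, p₂, he, -⟩
      exact absurd he (by simp)
  | cons i q ih =>
      intro Γ A h hf hx hcross
      rw [freeAt_cons] at hf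
      obtain ⟨hb0, hfc⟩ := hf
      have h' := wf4_unfold h
      cases h' with
      | base hb =>
          obtain ⟨Γ', N', hmc, rfl, hS⟩ := hb
          cases i with
          | zero =>
              have hxe : Γ' x = none := by
                rcases mcenv_at hmc x with ⟨h1, h2⟩ | ⟨h1, h2⟩ | ⟨h1, h2⟩ | ⟨h1, h2⟩ <;>
                  rcases hx with hx | hx | hx <;> simp_all
              exact wf4_free_env q hS hfc hxe
          | succ n => rw [child_mk1_bot] at hfc; exact absurd hfc freeAt_bot
      | vl z h1 h2 => rw [child_mk0_bot] at hfc; exact absurd hfc freeAt_bot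
      | vd z h1 h2 => rw [child_mk0_bot] at hfc; exact absurd hfc freeAt_bot
      | va z h1 h2 => rw [child_mk0_bot] at hfc; exact absurd hfc freeAt_bot
      | app hsp h1 h2 =>
          cases i with
          | zero =>
              have hcc := crossC_cons hcross (by simp)
              rcases hx with hx | hx | hx
              · rcases split4_lin_im hsp (Or.inl hx) with ⟨ha, hb'⟩ | ⟨ha, hb'⟩
                · exact ih (wf4_fold h1) hfc (Or.inl (ha.trans hx)) hcc
                · exact wf4_free_env q (wf4_fold h1) hfc hb'
              · obtain ⟨ha, -⟩ := split4_shared hsp (by rw [hx]; simp [Shared4])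
                exact ih (wf4_fold h1) hfc (Or.inr (Or.inl (ha.trans hx))) hcc
              · rcases split4_lin_im hsp (Or.inr hx) with ⟨ha, hb'⟩ | ⟨ha, hb'⟩
                · exact ih (wf4_fold h1) hfc (Or.inr (Or.inr (ha.trans hx))) hcc
                · exact wf4_free_env q (wf4_fold h1) hfc hb'
          | succ n =>
              cases n with
              | zero =>
                  have hcc := crossC_cons hcross (by simp)
                  rcases hx with hx | hx | hx
                  · rcases split4_lin_im hsp (Or.inl hx) with ⟨ha, hb'⟩ | ⟨ha, hb'⟩
                    · exact wf4_free_env q (wf4_fold h2) hfc hb'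
                    · exact ih (wf4_fold h2) hfc (Or.inl (ha.trans hx)) hcc
                  · obtain ⟨-, ha⟩ := split4_shared hsp (by rw [hx]; simp [Shared4])
                    exact ih (wf4_fold h2) hfc (Or.inr (Or.inl (ha.trans hx))) hcc
                  · rcases split4_lin_im hsp (Or.inr hx) with ⟨ha, hb'⟩ | ⟨ha, hb'⟩
                    · exact wf4_free_env q (wf4_fold h2) hfc hb'
                    · exact ih (wf4_fold h2) hfc (Or.inr (Or.inr (ha.trans hx))) hcc
              | succ m => rw [child_mk2_bot] at hfc; exact absurd hfc freeAt_bot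
      | @ll Γ z M h1 h2 =>
          have hzx : z ≠ x := by simpa [bindsX] using hb0
          cases i with
          | zero =>
              exact ih (wf4_fold h2) hfc
                (by rw [upd_ne Γ (Ne.symm hzx)]; exact hx)
                (crossC_cons hcross (by simp))
          | succ n => rw [child_mk1_bot] at hfc; exact absurd hfc freeAt_bot
      | @li1 Γ z M h1 h2 =>
          have hzx : z ≠ x := by simpa [bindsX] using hb0
          cases i with
          | zero =>
              exact ih (wf4_fold h2) hfc
                (by rw [upd_ne Γ (Ne.symm hzx)]; exact hx)
                (crossC_cons hcross (by simp))
          | succ n => rw [child_mk1_bot] at hfc; exact absurd hfc freeAt_bot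
      | @li2 Γ z M h1 h2 =>
          have hzx : z ≠ x := by simpa [bindsX] using hb0
          cases i with
          | zero =>
              exact ih (wf4_fold h2) hfc
                (by rw [upd_ne Γ (Ne.symm hzx)]; exact hx)
                (crossC_cons hcross (by simp))
          | succ n => rw [child_mk1_bot] at hfc; exact absurd hfc freeAt_bot
      | @lc Γ z M h1 h2 =>
          have hzx : z ≠ x := by simpa [bindsX] using hb0
          cases i with
          | zero =>
              exact ih (wf4_fold h2) hfc
                (by rw [upd_ne Γ (Ne.symm hzx)]; exact hx)
                (crossC_cons hcross (by simp))
          | succ n => rw [child_mk1_bot] at hfc; exact absurd hfc freeAt_bot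
      | mi h1 h2 =>
          cases i with
          | zero =>
              have hcc := crossC_cons hcross (by simp)
              rcases mienv_at h1 x with ⟨ha, hb'⟩ | ⟨ha, hb'⟩ | ⟨ha, hb'⟩ | ⟨ha, hb'⟩ | ⟨ha, hb'⟩
              · exact ih (wf4_fold h2) hfc (Or.inl hb') hcc
              · rcases hx with hx | hx | hx <;> rw [hx] at ha <;> exact absurd ha (by simp)
              · rcases hx with hx | hx | hx <;> rw [hx] at ha <;> exact absurd ha (by simp)
              · exact wf4_free_env q (wf4_fold h2) hfc hb'
              · rcases hx with hx | hx | hx <;> rw [hx] at ha <;> exact absurd ha (by simp)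
          | succ n => rw [child_mk1_bot] at hfc; exact absurd hfc freeAt_bot

/-- (NOCM) A free occurrence of a variable marked `cm` must be inside a
coinductive box. -/
lemma wf4_cm_cross {x : ℕ} : ∀ (p : List ℕ) {Γ : Env4} {A : T}, WF4 Γ A →
    FreeAt x A p → Γ x = some Pat4.cm → CrossC A p := by
  intro p
  induction p with
  | nil =>
      intro Γ A h hf hx
      rw [freeAt_nil] at hf
      exfalso
      have h' := wf4_unfold h
      cases h' with
      | base hb => obtain ⟨Γ', N', hmc, rfl, hS⟩ := hb; simp at hf
      | vl z h1 h2 =>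
          simp only [mk0_nil, Option.some.injEq, Shape.var.injEq] at hf
          subst hf; simp_all
      | vd z h1 h2 =>
          simp only [mk0_nil, Option.some.injEq, Shape.var.injEq] at hf
          subst hf; simp_all
      | va z h1 h2 =>
          simp only [mk0_nil, Option.some.injEq, Shape.var.injEq] at hf
          subst hf; simp_all
      | app hsp h1 h2 => simp at hf
      | ll h1 h2 => simp at hf
      | li1 h1 h2 => simp at hf
      | li2 h1 h2 => simp at hf
      | lc h1 h2 => simp at hf
      | mi h1 h2 => simp at hf
  | cons i q ih =>
      intro Γ A h hf hx
      rw [freeAt_cons] at hf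
      obtain ⟨hb0, hfc⟩ := hf
      have h' := wf4_unfold h
      cases h' with
      | base hb =>
          obtain ⟨Γ', N', hmc, rfl, hS⟩ := hb
          exact ⟨[], i, q, rfl, rfl⟩
      | vl z h1 h2 => rw [child_mk0_bot] at hfc; exact absurd hfc freeAt_bot
      | vd z h1 h2 => rw [child_mk0_bot] at hfc; exact absurd hfc freeAt_bot
      | va z h1 h2 => rw [child_mk0_bot] at hfc; exact absurd hfc freeAt_bot
      | app hsp h1 h2 =>
          obtain ⟨ha1, ha2⟩ := split4_shared hsp (by rw [hx]; simp [Shared4])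
          cases i with
          | zero => exact crossC_lift (ih (wf4_fold h1) hfc (ha1.trans hx))
          | succ n =>
              cases n with
              | zero => exact crossC_lift (ih (wf4_fold h2) hfc (ha2.trans hx))
              | succ m => rw [child_mk2_bot] at hfc; exact absurd hfc freeAt_bot
      | @ll Γ z M h1 h2 =>
          have hzx : z ≠ x := by simpa [bindsX] using hb0
          cases i with
          | zero =>
              exact crossC_lift (ih (wf4_fold h2) hfc
                (by rw [upd_ne Γ (Ne.symm hzx)]; exact hx))
          | succ n => rw [child_mk1_bot] at hfc; exact absurd hfc freeAt_bot
      | @li1 Γ z M h1 h2 =>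
          have hzx : z ≠ x := by simpa [bindsX] using hb0
          cases i with
          | zero =>
              exact crossC_lift (ih (wf4_fold h2) hfc
                (by rw [upd_ne Γ (Ne.symm hzx)]; exact hx))
          | succ n => rw [child_mk1_bot] at hfc; exact absurd hfc freeAt_bot
      | @li2 Γ z M h1 h2 =>
          have hzx : z ≠ x := by simpa [bindsX] using hb0
          cases i with
          | zero =>
              exact crossC_lift (ih (wf4_fold h2) hfc
                (by rw [upd_ne Γ (Ne.symm hzx)]; exact hx))
          | succ n => rw [child_mk1_bot] at hfc; exact absurd hfc freeAt_bot
      | @lc Γ z M h1 h2 =>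
          have hzx : z ≠ x := by simpa [bindsX] using hb0
          cases i with
          | zero =>
              exact crossC_lift (ih (wf4_fold h2) hfc
                (by rw [upd_ne Γ (Ne.symm hzx)]; exact hx))
          | succ n => rw [child_mk1_bot] at hfc; exact absurd hfc freeAt_bot
      | @mi Γ Γ' M h1 h2 =>
          cases i with
          | zero =>
              have hcm : Γ' x = some Pat4.cm := by
                rcases mienv_at h1 x with ⟨ha, hb'⟩ | ⟨ha, hb'⟩ | ⟨ha, hb'⟩ | ⟨ha, hb'⟩ | ⟨ha, hb'⟩ <;>
                  rw [hx] at ha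
                · exact absurd ha (by simp)
                · exact hb'
                · exact absurd ha (by simp)
                · exact absurd ha (by simp)
                · exact absurd ha (by simp)
              exact crossC_lift (ih (wf4_fold h2) hfc hcm)
          | succ n => rw [child_mk1_bot] at hfc; exact absurd hfc freeAt_bot
/-! ### The key conditions derived from well-formation -/

lemma split4_back_shared {Γ Γ₁ Γ₂ : Env4} {y : ℕ} (hs : Split4 Γ Γ₁ Γ₂)
    (h : Γ₂ y = some Pat4.cm ∨ Γ₂ y = some Pat4.am) :
    Γ₁ y = Γ₂ y := by
  rcases hs y with ⟨-, h1, h2⟩ | ⟨h0, h1, h2⟩ | ⟨h0, ⟨h1, h2⟩ | ⟨h1, h2⟩⟩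
  · rw [h1, h2]
  · rcases h with h | h <;> simp_all
  · rcases h with h | h <;> simp_all
  · rcases h0 with h0 | h0 <;> rcases h with h | h <;> simp_all

/-- For redexes binding a `lin`/`dm`/`im` variable, the condition CONDW holds
vacuously. -/
lemma condw_of_lid {x : ℕ} {Δ : Env4} {C A : T} (h : WF4 Δ A)
    (hx : Δ x = some Pat4.lin ∨ Δ x = some Pat4.dm ∨ Δ x = some Pat4.im) :
    CONDW x C A := by
  intro p y hc hnx hf _
  exfalso
  obtain ⟨q, hq⟩ := hf
  have hfull : FreeAt x A ((p ++ [0]) ++ q) := by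
    refine freeAt_sub_append ?_ hq
    intro p₁ i p₂ he
    rcases prefix_of_append_singleton he with rfl | ⟨j, r, rfl⟩
    · rw [hc]; simp [bindsX]
    · exact hnx p₁ j r rfl
  have hcross : CrossC A ((p ++ [0]) ++ q) := ⟨p, 0, q, by simp, hc⟩
  exact wf4_lid_nocross _ h hfull hx hcross

/-- For a coinductive redex, the condition CONDW holds. -/
lemma condw_of_coi {x : ℕ} {Γ Γ₁ Γ₂ : Env4} {M₁ M₂ : T}
    (hsp : Split4 Γ Γ₁ Γ₂) (hx1 : Γ₁ x = none)
    (h1 : WF4 (Γ₁.upd x (some Pat4.cm)) M₁)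
    (h2 : WF4 Γ₂ (mk1 Shape.cbox M₂)) : CONDW x M₂ M₁ := by
  intro p y hc hnx hf hbd
  constructor
  · -- ¬ Free y M₂
    intro hyM₂
    obtain ⟨Γ₂', hmc, hw₂⟩ := wf4_cbox_inv h2
    obtain ⟨r, hr⟩ := hyM₂
    have hne : Γ₂' y ≠ none := wf4_free_env r hw₂ hr
    have ham : Γ₂' y = some Pat4.am := by
      rcases mcenv_range hmc y with h' | h'
      · exact h'
      · exact absurd h' hne
    have hΓ₂ : Γ₂ y = some Pat4.cm ∨ Γ₂ y = some Pat4.am := mcenv_back_am hmc ham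
    have hΓ₁ : Γ₁ y = some Pat4.cm ∨ Γ₁ y = some Pat4.am := by
      rw [split4_back_shared hsp hΓ₂]; exact hΓ₂
    have hyx : y ≠ x := by
      intro he
      rcases hΓ₁ with h' | h' <;> rw [he, hx1] at h' <;> cases h'
    have hΔ : (Γ₁.upd x (some Pat4.cm)) y = some Pat4.cm ∨
        (Γ₁.upd x (some Pat4.cm)) y = some Pat4.am := by
      rw [upd_ne Γ₁ hyx]; exact hΓ₁
    obtain ⟨r', hr'⟩ := boundIn_sub hbd
    have := wf4_no_bind r' h1 hΔ
    rw [this] at hr'; cases hr'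
  · -- y ≠ x
    intro he
    subst he
    obtain ⟨Θ, hrange, hw⟩ := wf4_cbox_sub p h1 hc
    obtain ⟨q, hq⟩ := hf
    have hne : Θ y ≠ none := wf4_free_env q hw hq
    have ham : Θ y = some Pat4.am := by
      rcases hrange y with h' | h'
      · exact h'
      · exact absurd h' hne
    obtain ⟨r', hr'⟩ := hbd
    have := wf4_no_bind r' hw (Or.inr ham)
    rw [this] at hr'; cases hr'

/-- For a coinductive redex, the bound variable occurs only inside
coinductive boxes. -/
lemma nff_of_coi {x : ℕ} {Γ₁ : Env4} {M₁ : T}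
    (h1 : WF4 (Γ₁.upd x (some Pat4.cm)) M₁) : NFF x M₁ :=
  fun p hp => wf4_cm_cross p h1 hp (upd_same Γ₁ x _)

/-! ### The main induction for postponement -/

lemma postpone_main {s : List Bool} {N L : T} (hred : Red s N L) :
    s.count true = 0 → ∀ {M : T}, (∃ Γ, WF4 Γ M) → Next M N →
      ∃ P, Red s M P ∧ Next P L := by
  induction hred with
  | base hb =>
      intro _ M hwf hn
      cases hb with
      | lin x N₁ N₂ =>
          obtain ⟨F, M₂, rfl, hnF, hn2⟩ := next_inv_app hn
          obtain ⟨M₁, rfl, hn1⟩ := next_inv_mk1 ⟨x, Or.inl rfl⟩ hnF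
          obtain ⟨Γ, hw⟩ := hwf
          obtain ⟨Γ₁, Γ₂, hsp, hw1, hw2⟩ := wf4_app_inv hw
          obtain ⟨hx1, hwb⟩ := wf4_labs_inv hw1
          refine ⟨subst x M₂ M₁, Red.base (Basic.lin x M₁ M₂), ?_⟩
          have hcond : CONDW x M₂ M₁ := condw_of_lid hwb (Or.inl (upd_same Γ₁ x _))
          have := next_subst (Relation.ReflTransGen.refl) hn2 hn1 hcond
          rwa [msubst_self] at this
      | ind x N₁ N₂ =>
          obtain ⟨F, G, rfl, hnF, hnG⟩ := next_inv_app hn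
          obtain ⟨M₁, rfl, hn1⟩ := next_inv_mk1 ⟨x, Or.inr (Or.inl rfl)⟩ hnF
          obtain ⟨M₂, rfl, hn2⟩ :=
            next_inv_mk1 ⟨0, Or.inr (Or.inr (Or.inr ⟨rfl, rfl⟩))⟩ hnG
          obtain ⟨Γ, hw⟩ := hwf
          obtain ⟨Γ₁, Γ₂, hsp, hw1, hw2⟩ := wf4_app_inv hw
          obtain ⟨hx1, hwb⟩ := wf4_iabs_inv hw1
          refine ⟨subst x M₂ M₁, Red.base (Basic.ind x M₁ M₂), ?_⟩
          have hcond : CONDW x M₂ M₁ := by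
            rcases hwb with hwb | hwb
            · exact condw_of_lid hwb (Or.inr (Or.inl (upd_same Γ₁ x _)))
            · exact condw_of_lid hwb (Or.inr (Or.inr (upd_same Γ₁ x _)))
          have := next_subst (Relation.ReflTransGen.refl) hn2 hn1 hcond
          rwa [msubst_self] at this
      | coi x N₁ N₂ =>
          obtain ⟨F, G, rfl, hnF, hnG⟩ := next_inv_app hn
          obtain ⟨M₁, rfl, hn1⟩ := next_inv_mk1 ⟨x, Or.inr (Or.inr (Or.inl rfl))⟩ hnF
          obtain ⟨M₂, K, rfl, hstar, hnK⟩ := next_inv_cbox hnG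
          obtain ⟨Γ, hw⟩ := hwf
          obtain ⟨Γ₁, Γ₂, hsp, hw1, hw2⟩ := wf4_app_inv hw
          obtain ⟨hx1, hwb⟩ := wf4_cabs_inv hw1
          refine ⟨subst x M₂ M₁, Red.base (Basic.coi x M₁ M₂), ?_⟩
          have hcond : CONDW x M₂ M₁ := condw_of_coi hsp hx1 hwb hw2
          have := next_subst hstar hnK hn1 hcond
          rwa [msubst_nff (nff_of_coi hwb)] at this
  | @appL s N₁ N₂ P hred' ih =>
      intro hcount M hwf hn
      obtain ⟨M₁, M₃, rfl, hn1, hn3⟩ := next_inv_app hn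
      obtain ⟨Γ, hw⟩ := hwf
      obtain ⟨Γ₁, Γ₂, hsp, hw1, hw2⟩ := wf4_app_inv hw
      obtain ⟨P₁, hP1, hP2⟩ := ih hcount ⟨Γ₁, hw1⟩ hn1
      exact ⟨mk2 P₁ M₃, Red.appL _ hP1, next_app hP2 hn3⟩
  | @appR s N₁ N₂ P hred' ih =>
      intro hcount M hwf hn
      obtain ⟨M₁, M₃, rfl, hn1, hn3⟩ := next_inv_app hn
      obtain ⟨Γ, hw⟩ := hwf
      obtain ⟨Γ₁, Γ₂, hsp, hw1, hw2⟩ := wf4_app_inv hw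
      obtain ⟨P₃, hP1, hP2⟩ := ih hcount ⟨Γ₂, hw2⟩ hn3
      exact ⟨mk2 M₁ P₃, Red.appR _ hP1, next_app hn1 hP2⟩
  | @labs s N₁ N₂ z hred' ih =>
      intro hcount M hwf hn
      obtain ⟨M₁, rfl, hn1⟩ := next_inv_mk1 ⟨z, Or.inl rfl⟩ hn
      obtain ⟨Γ, hw⟩ := hwf
      obtain ⟨-, hw1⟩ := wf4_labs_inv hw
      obtain ⟨P₁, hP1, hP2⟩ := ih hcount ⟨_, hw1⟩ hn1
      exact ⟨mk1 (Shape.labs z) P₁, Red.labs z hP1,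
        next_mk1 (Or.inr ⟨z, Or.inl rfl⟩) hP2⟩
  | @iabs s N₁ N₂ z hred' ih =>
      intro hcount M hwf hn
      obtain ⟨M₁, rfl, hn1⟩ := next_inv_mk1 ⟨z, Or.inr (Or.inl rfl)⟩ hn
      obtain ⟨Γ, hw⟩ := hwf
      obtain ⟨-, hw1⟩ := wf4_iabs_inv hw
      have hwf1 : ∃ Δ, WF4 Δ M₁ := by
        rcases hw1 with hw1 | hw1
        · exact ⟨_, hw1⟩
        · exact ⟨_, hw1⟩
      obtain ⟨P₁, hP1, hP2⟩ := ih hcount hwf1 hn1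
      exact ⟨mk1 (Shape.iabs z) P₁, Red.iabs z hP1,
        next_mk1 (Or.inr ⟨z, Or.inr (Or.inl rfl)⟩) hP2⟩
  | @cabs s N₁ N₂ z hred' ih =>
      intro hcount M hwf hn
      obtain ⟨M₁, rfl, hn1⟩ := next_inv_mk1 ⟨z, Or.inr (Or.inr (Or.inl rfl))⟩ hn
      obtain ⟨Γ, hw⟩ := hwf
      obtain ⟨-, hw1⟩ := wf4_cabs_inv hw
      obtain ⟨P₁, hP1, hP2⟩ := ih hcount ⟨_, hw1⟩ hn1
      exact ⟨mk1 (Shape.cabs z) P₁, Red.cabs z hP1,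
        next_mk1 (Or.inr ⟨z, Or.inr (Or.inr rfl)⟩) hP2⟩
  | @ibox s N₁ N₂ hred' ih =>
      intro hcount M hwf hn
      have hcount' : s.count true = 0 := by simpa using hcount
      obtain ⟨M₁, rfl, hn1⟩ :=
        next_inv_mk1 ⟨0, Or.inr (Or.inr (Or.inr ⟨rfl, rfl⟩))⟩ hn
      obtain ⟨Γ, hw⟩ := hwf
      obtain ⟨Γ', hmi, hw1⟩ := wf4_ibox_inv hw
      obtain ⟨P₁, hP1, hP2⟩ := ih hcount' ⟨Γ', hw1⟩ hn1
      exact ⟨mk1 Shape.ibox P₁, Red.ibox hP1, next_mk1 (Or.inl rfl) hP2⟩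
  | @cbox s N₁ N₂ hred' ih =>
      intro hcount
      exfalso
      simp [List.count_cons] at hcount

/-- Postponement: if `M ⤳ N` and `N` reduces at depth 0 to `L`, then there is
`P` with `M` reducing at depth 0 to `P` and `P ⤳ L`. -/
theorem postponement (Γ : Env4) (M N L : T)
    (h : WF4 Γ M) (hn : Next M N) (hr : RedAt 0 N L) :
    ∃ P : T, RedAt 0 M P ∧ Next P L := by
  obtain ⟨s, hs, hred⟩ := hr
  obtain ⟨P, hP1, hP2⟩ := postpone_main hred hs ⟨Γ, h⟩ hn
  exact ⟨P, ⟨s, hs, hP1⟩, hP2⟩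

end LLInf
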